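/- arXiv:2403.18179 — 8 statements merged into one kernel-verified Lean document; each statement's English description precedes it below -/
import Mathlib

section
/- Let C, ρ > 0, let L ≥ 2 be an integer, let Λ be a finite set with |Λ| = L, and let η : Λ → ℕ satisfy (1/L)·Σ_{x∈Λ} η_x ≤ ρ. Then for every integer n ≥ 1, (1/(L·(L−1))) · Σ_{x∈Λ} Σ_{y∈Λ, y≠x} [ c(η_y, η_x)·((η_x+1)^n − η_x^n) + c(η_x, η_y)·((η_x−1)^n − η_x^n) ] ≤ 2·C·ρ · (1/L) · Σ_{x∈Λ} (1+η_x)·((η_x+1)^n − η_x^n), where all powers are taken in ℤ and the term containing (η_x−1)^n vanishes when η_x = 0 because c(0, η_y) = 0. -/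
/-- Key drift inequality for the empirical n-th moment under the
complete-graph generator with sublinear rates. -/
theorem stmt_0
    (C ρ : ℝ) (hC : 0 < C) (hρ : 0 < ρ)
    (c : ℕ → ℕ → ℝ)
    (hc_nonneg : ∀ k l, 0 ≤ c k l)
    (hc_zero : ∀ l, c 0 l = 0)
    (hc_sub : ∀ k l, c k l ≤ C * k * (1 + l))
    (L : ℕ) (hL : 2 ≤ L)
    (Λ : Type*) [Fintype Λ] [DecidableEq Λ]
    (hcard : Fintype.card Λ = L)
    (η : Λ → ℕ)
    (hmass : (1 / (L : ℝ)) * ∑ x, (η x : ℝ) ≤ ρ)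
    (n : ℕ) (hn : 1 ≤ n) :
    (1 / ((L : ℝ) * ((L : ℝ) - 1))) *
      ∑ x, ∑ y ∈ Finset.univ.erase x,
        (c (η y) (η x) * ((((η x : ℤ) + 1) ^ n - (η x : ℤ) ^ n : ℤ) : ℝ)
          + c (η x) (η y) * ((((η x : ℤ) - 1) ^ n - (η x : ℤ) ^ n : ℤ) : ℝ))
    ≤ 2 * C * ρ *
      ((1 / (L : ℝ)) *
        ∑ x, (1 + (η x : ℝ)) * ((((η x : ℤ) + 1) ^ n - (η x : ℤ) ^ n : ℤ) : ℝ)) := by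
  have hL2 : (2:ℝ) ≤ (L:ℝ) := by exact_mod_cast hL
  have hLpos : (0:ℝ) < L := by linarith
  have hL1 : (0:ℝ) < (L:ℝ) - 1 := by linarith
  set A : Λ → ℝ := fun x => ((((η x : ℤ) + 1) ^ n - (η x : ℤ) ^ n : ℤ) : ℝ) with hA
  have hAnn : ∀ x, 0 ≤ A x := by
    intro x
    have h : (η x : ℤ) ^ n ≤ ((η x : ℤ) + 1) ^ n :=
      pow_le_pow_left₀ (by positivity) (by linarith) n
    have h' : (0:ℤ) ≤ ((η x : ℤ) + 1) ^ n - (η x : ℤ) ^ n := by linarith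
    simpa [hA] using (Int.cast_nonneg_iff.mpr h' : (0:ℝ) ≤ _)
  set M : ℝ := ∑ y, (η y : ℝ) with hM
  have hMnn : 0 ≤ M := Finset.sum_nonneg fun y _ => by positivity
  have hMle : M ≤ ρ * L := by
    rw [one_div, inv_mul_le_iff₀ hLpos] at hmass
    simpa [hM, mul_comm] using hmass
  set S : ℝ := ∑ x, (1 + (η x : ℝ)) * A x with hS
  have hSnn : 0 ≤ S :=
    Finset.sum_nonneg fun x _ => mul_nonneg (by positivity) (hAnn x)
  have hpt : ∀ x y : Λ, c (η y) (η x) * A x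
      + c (η x) (η y) * ((((η x : ℤ) - 1) ^ n - (η x : ℤ) ^ n : ℤ) : ℝ)
      ≤ (η y : ℝ) * (C * ((1 + (η x : ℝ)) * A x)) := by
    intro x y
    have h1 : c (η y) (η x) * A x ≤ (C * (η y : ℝ) * (1 + (η x:ℝ))) * A x :=
      mul_le_mul_of_nonneg_right (hc_sub _ _) (hAnn x)
    have h2 : c (η x) (η y) * ((((η x : ℤ) - 1) ^ n - (η x : ℤ) ^ n : ℤ) : ℝ) ≤ 0 := by
      rcases Nat.eq_zero_or_pos (η x) with h0 | h0
      · simp [h0, hc_zero]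
      · apply mul_nonpos_of_nonneg_of_nonpos (hc_nonneg _ _)
        have h1x : (1:ℤ) ≤ (η x : ℤ) := by exact_mod_cast h0
        have hp : ((η x : ℤ) - 1) ^ n ≤ (η x : ℤ) ^ n :=
          pow_le_pow_left₀ (by linarith) (by linarith) n
        have h' : (((η x : ℤ) - 1) ^ n - (η x : ℤ) ^ n : ℤ) ≤ 0 := by linarith
        exact_mod_cast h'
    calc c (η y) (η x) * A x
        + c (η x) (η y) * ((((η x : ℤ) - 1) ^ n - (η x : ℤ) ^ n : ℤ) : ℝ)
        ≤ (C * (η y : ℝ) * (1 + (η x:ℝ))) * A x + 0 := add_le_add h1 h2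
      _ = (η y : ℝ) * (C * ((1 + (η x : ℝ)) * A x)) := by ring
  have hsum : (∑ x, ∑ y ∈ Finset.univ.erase x,
        (c (η y) (η x) * A x
          + c (η x) (η y) * ((((η x : ℤ) - 1) ^ n - (η x : ℤ) ^ n : ℤ) : ℝ)))
      ≤ ρ * L * (C * S) := by
    calc (∑ x, ∑ y ∈ Finset.univ.erase x,
        (c (η y) (η x) * A x
          + c (η x) (η y) * ((((η x : ℤ) - 1) ^ n - (η x : ℤ) ^ n : ℤ) : ℝ)))
        ≤ ∑ x, ∑ y ∈ Finset.univ.erase x,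
            (η y : ℝ) * (C * ((1 + (η x : ℝ)) * A x)) :=
          Finset.sum_le_sum fun x _ => Finset.sum_le_sum fun y _ => hpt x y
      _ ≤ ∑ x, ∑ y : Λ, (η y : ℝ) * (C * ((1 + (η x : ℝ)) * A x)) := by
          refine Finset.sum_le_sum fun x _ => ?_
          refine Finset.sum_le_sum_of_subset_of_nonneg (Finset.erase_subset _ _) ?_
          intro y _ _
          exact mul_nonneg (by positivity)
            (mul_nonneg hC.le (mul_nonneg (by positivity) (hAnn x)))
      _ = ∑ x, M * (C * ((1 + (η x : ℝ)) * A x)) := by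
          refine Finset.sum_congr rfl fun x _ => ?_
          rw [hM, Finset.sum_mul]
      _ ≤ ∑ x, (ρ * L) * (C * ((1 + (η x : ℝ)) * A x)) := by
          refine Finset.sum_le_sum fun x _ => ?_
          exact mul_le_mul_of_nonneg_right hMle
            (mul_nonneg hC.le (mul_nonneg (by positivity) (hAnn x)))
      _ = ρ * L * (C * S) := by
          rw [hS, Finset.mul_sum, Finset.mul_sum]
  have hfac : (0:ℝ) ≤ 1 / ((L : ℝ) * ((L : ℝ) - 1)) := by positivity
  calc (1 / ((L : ℝ) * ((L : ℝ) - 1))) *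
      ∑ x, ∑ y ∈ Finset.univ.erase x,
        (c (η y) (η x) * A x
          + c (η x) (η y) * ((((η x : ℤ) - 1) ^ n - (η x : ℤ) ^ n : ℤ) : ℝ))
      ≤ (1 / ((L : ℝ) * ((L : ℝ) - 1))) * (ρ * L * (C * S)) :=
        mul_le_mul_of_nonneg_left hsum hfac
    _ = (C * ρ * S) / ((L:ℝ) - 1) := by field_simp
    _ ≤ 2 * (C * ρ * S) / (L:ℝ) := by
        rw [div_le_div_iff₀ hL1 hLpos]
        nlinarith [mul_nonneg (mul_nonneg (mul_nonneg hC.le hρ.le) hSnn)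
          (by linarith : (0:ℝ) ≤ (L:ℝ) - 2)]
    _ = 2 * C * ρ * ((1 / (L : ℝ)) * S) := by ring
end

section
/- For every integer n ≥ 1 and all C, ρ > 0 there exists a constant C̃ > 0, depending only on C, ρ and n, such that the following holds: for every integer L ≥ 2, every integer W ≥ 1, and every finitely supported F : ℕ → [0,∞) with Σ_k F_k = 1 and Σ_k k·F_k ≤ ρ, one has (L/(L−1))·Σ_{k≥1} c(k,W)·F_k·((W+1)^n − W^n) + (L/(L−1))·[ ((W−1)/W)·Σ_{k≥0} c(W,k)·F_k·((W−1)^n − W^n) + (1/W)·Σ_{k≥0} c(W,k)·F_k·((k+1)^n − W^n) ] − (1/(L−1))·c(W,W)·[ ((W+1)/W)·((W+1)^n − W^n) + ((W−1)/W)·((W−1)^n − W^n) ] ≤ C̃·( 1 + W^n + Σ_{k≥0} (1+k)^{n+1}·F_k ). -/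
lemma drift_pow1 (x : ℝ) (hx : 0 ≤ x) (n : ℕ) :
    (1 + x) * ((x + 1) ^ n - x ^ n) ≤ n * (x + 1) ^ n := by
  induction n with
  | zero => simp
  | succ m ih =>
    have hx1 : x ^ m ≤ (x + 1) ^ m := pow_le_pow_left₀ hx (by linarith) m
    have hp : (0:ℝ) ≤ (x + 1) ^ m := pow_nonneg (by linarith) m
    have e1 : (x + 1) ^ (m + 1) = (x + 1) ^ m * (x + 1) := pow_succ _ _
    have e2 : x ^ (m + 1) = x ^ m * x := pow_succ _ _
    push_cast
    rw [e1, e2]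
    nlinarith [mul_le_mul_of_nonneg_left ih (by linarith : (0:ℝ) ≤ x + 1)]

lemma drift_pow2 (x : ℝ) (hx : 1 ≤ x) (m : ℕ) :
    2 * x ^ m ≤ (x + 1) ^ m + (x - 1) ^ m := by
  induction m with
  | zero => norm_num
  | succ m ih =>
    have h1 : (x - 1) ^ m ≤ (x + 1) ^ m := pow_le_pow_left₀ (by linarith) (by linarith) m
    rw [pow_succ, pow_succ, pow_succ]
    nlinarith [mul_le_mul_of_nonneg_left ih (by linarith : (0:ℝ) ≤ x)]

lemma summable_of_fin_supp {g : ℕ → ℝ} (h : (Function.support g).Finite) : Summable g :=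
  summable_of_ne_finset_zero (s := h.toFinset) (fun b hb => by
    by_contra h'
    exact hb (h.mem_toFinset.mpr h'))

lemma summable_dom (F : ℕ → ℝ) (hFfin : (Function.support F).Finite)
    (g : ℕ → ℝ) (h : ∀ k, F k = 0 → g k = 0) : Summable g := by
  apply summable_of_fin_supp
  apply hFfin.subset
  intro k hk
  simp only [Function.mem_support] at *
  exact fun h0 => hk (h k h0)

lemma summable_dom' (F : ℕ → ℝ) (hFfin : (Function.support F).Finite)
    (g : ℕ → ℝ) (h : ∀ k, F (k + 1) = 0 → g k = 0) : Summable g := by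
  apply summable_of_fin_supp
  have hinj : Set.InjOn (fun k : ℕ => k + 1) ((fun k : ℕ => k + 1) ⁻¹' Function.support F) :=
    fun a _ b _ hab => by simpa using hab
  apply Set.Finite.subset (hFfin.preimage hinj)
  intro k hk
  simp only [Set.mem_preimage, Function.mem_support] at *
  exact fun h0 => hk (h k h0)


set_option maxHeartbeats 1600000 in
/-- Key drift inequality for the tagged-site occupation number process
applied to `g(m) = m^n`: the generator is bounded by
`C̃·(1 + W^n + Σ_k (1+k)^{n+1}·F_k)` with `C̃` depending only on `C, ρ, n`. -/
theorem stmt_3 (n : ℕ) (hn : 1 ≤ n) (C ρ : ℝ) (hC : 0 < C) (hρ : 0 < ρ) :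
    ∃ Ct : ℝ, 0 < Ct ∧
      ∀ c : ℕ → ℕ → ℝ,
        (∀ k l, 0 ≤ c k l) →
        (∀ l, c 0 l = 0) →
        (∀ k l, c k l ≤ C * k * (1 + l)) →
        ∀ L : ℕ, 2 ≤ L → ∀ W : ℕ, 1 ≤ W →
        ∀ F : ℕ → ℝ, (∀ k, 0 ≤ F k) → (Function.support F).Finite →
          (∑' k : ℕ, F k) = 1 → (∑' k : ℕ, (k : ℝ) * F k) ≤ ρ →
          ((L : ℝ) / ((L : ℝ) - 1)) *
              (∑' k : ℕ, c (k + 1) W * F (k + 1)) *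
              ((((W : ℤ) + 1) ^ n - (W : ℤ) ^ n : ℤ) : ℝ)
            + ((L : ℝ) / ((L : ℝ) - 1)) *
              ((((W : ℝ) - 1) / (W : ℝ)) * (∑' k : ℕ, c W k * F k) *
                  ((((W : ℤ) - 1) ^ n - (W : ℤ) ^ n : ℤ) : ℝ)
                + (1 / (W : ℝ)) *
                  ∑' k : ℕ, c W k * F k * ((((k : ℤ) + 1) ^ n - (W : ℤ) ^ n : ℤ) : ℝ))
            - (1 / ((L : ℝ) - 1)) * c W W *
              ((((W : ℝ) + 1) / (W : ℝ)) * ((((W : ℤ) + 1) ^ n - (W : ℤ) ^ n : ℤ) : ℝ)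
                + (((W : ℝ) - 1) / (W : ℝ)) * ((((W : ℤ) - 1) ^ n - (W : ℤ) ^ n : ℤ) : ℝ))
          ≤ Ct * (1 + (W : ℝ) ^ n + ∑' k : ℕ, (1 + (k : ℝ)) ^ (n + 1) * F k) := by
  refine ⟨2 * C * ρ * n * 2 ^ n + 2 * C + 1, by positivity, ?_⟩
  intro c hc hc0 hcC L hL W hW F hF hFfin hF1 hFρ
  have hw1 : (1:ℝ) ≤ (W:ℝ) := by exact_mod_cast hW
  have hw0 : (0:ℝ) < (W:ℝ) := by linarith
  have hL2 : (2:ℝ) ≤ (L:ℝ) := by exact_mod_cast hL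
  have hL1 : (1:ℝ) ≤ (L:ℝ) - 1 := by linarith
  have hr2 : (L:ℝ) / ((L:ℝ) - 1) ≤ 2 := by
    rw [div_le_iff₀ (by linarith)]; linarith
  have hr0 : 0 ≤ (L:ℝ) / ((L:ℝ) - 1) := by positivity
  -- cast simplifications
  have hDcast : ((((W : ℤ) + 1) ^ n - (W : ℤ) ^ n : ℤ) : ℝ) = ((W:ℝ) + 1) ^ n - (W:ℝ) ^ n := by
    push_cast; ring
  have hEcast : ((((W : ℤ) - 1) ^ n - (W : ℤ) ^ n : ℤ) : ℝ) = ((W:ℝ) - 1) ^ n - (W:ℝ) ^ n := by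
    push_cast; ring
  rw [hDcast, hEcast]
  -- nonnegativity of sums (with explicit bodies)
  have hTnn : 0 ≤ ∑' k : ℕ, (1 + (k : ℝ)) ^ (n + 1) * F k :=
    tsum_nonneg fun k => mul_nonneg (by positivity) (hF k)
  have hS1nn : 0 ≤ ∑' k : ℕ, c (k + 1) W * F (k + 1) :=
    tsum_nonneg fun k => mul_nonneg (hc _ _) (hF _)
  have hS2nn : 0 ≤ ∑' k : ℕ, c W k * F k :=
    tsum_nonneg fun k => mul_nonneg (hc _ _) (hF _)
  -- moment bound for the shifted sum
  have hsmom : Summable (fun m : ℕ => (m:ℝ) * F m) :=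
    summable_dom F hFfin _ (fun k h0 => by rw [h0, mul_zero])
  have hmom : ∑' k : ℕ, ((k:ℝ) + 1) * F (k + 1) ≤ ρ := by
    have h0 := Summable.tsum_eq_zero_add hsmom
    simp only [Nat.cast_zero, zero_mul, zero_add] at h0
    have h1 : ∑' k : ℕ, ((k:ℝ) + 1) * F (k + 1) = ∑' k : ℕ, ((k + 1 : ℕ) : ℝ) * F (k + 1) :=
      tsum_congr fun k => by push_cast; ring
    rw [h1, ← h0]; exact hFρ
  -- bound on S1
  have hS1b : (∑' k : ℕ, c (k + 1) W * F (k + 1)) ≤ C * (1 + (W:ℝ)) * ρ := by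
    have hsl : Summable (fun k : ℕ => c (k + 1) W * F (k + 1)) :=
      summable_dom' F hFfin _ (fun k h0 => by rw [h0, mul_zero])
    have hsr : Summable (fun k : ℕ => (C * (1 + (W:ℝ))) * (((k:ℝ) + 1) * F (k + 1))) :=
      summable_dom' F hFfin _ (fun k h0 => by rw [h0, mul_zero, mul_zero])
    have hle : (∑' k : ℕ, c (k + 1) W * F (k + 1))
        ≤ ∑' k : ℕ, (C * (1 + (W:ℝ))) * (((k:ℝ) + 1) * F (k + 1)) := by
      apply Summable.tsum_le_tsum _ hsl hsr
      intro k
      have h1 := mul_le_mul_of_nonneg_right (hcC (k + 1) W) (hF (k + 1))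
      refine le_trans h1 (le_of_eq ?_)
      push_cast; ring
    rw [tsum_mul_left] at hle
    calc (∑' k : ℕ, c (k + 1) W * F (k + 1))
        ≤ (C * (1 + (W:ℝ))) * ∑' k : ℕ, ((k:ℝ) + 1) * F (k + 1) := hle
      _ ≤ C * (1 + (W:ℝ)) * ρ := by
          apply mul_le_mul_of_nonneg_left hmom (by positivity)
  -- bound on the B2 sum
  have hB2b : (∑' k : ℕ, c W k * F k * ((((k : ℤ) + 1) ^ n - (W : ℤ) ^ n : ℤ) : ℝ))
      ≤ C * (W:ℝ) * ∑' k : ℕ, (1 + (k : ℝ)) ^ (n + 1) * F k := by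
    have hsl : Summable (fun k : ℕ => c W k * F k * ((((k : ℤ) + 1) ^ n - (W : ℤ) ^ n : ℤ) : ℝ)) :=
      summable_dom F hFfin _ (fun k h0 => by rw [h0, mul_zero, zero_mul])
    have hsr : Summable (fun k : ℕ => (C * (W:ℝ)) * ((1 + (k:ℝ)) ^ (n + 1) * F k)) :=
      summable_dom F hFfin _ (fun k h0 => by rw [h0, mul_zero, mul_zero])
    have hle : (∑' k : ℕ, c W k * F k * ((((k : ℤ) + 1) ^ n - (W : ℤ) ^ n : ℤ) : ℝ))
        ≤ ∑' k : ℕ, (C * (W:ℝ)) * ((1 + (k:ℝ)) ^ (n + 1) * F k) := by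
      apply Summable.tsum_le_tsum _ hsl hsr
      intro k
      have hcast : ((((k : ℤ) + 1) ^ n - (W : ℤ) ^ n : ℤ) : ℝ) = ((k:ℝ) + 1) ^ n - (W:ℝ) ^ n := by
        push_cast; ring
      rw [hcast]
      have hP : (0:ℝ) ≤ ((k:ℝ) + 1) ^ n := by positivity
      have hXP : ((k:ℝ) + 1) ^ n - (W:ℝ) ^ n ≤ ((k:ℝ) + 1) ^ n := by
        have : (0:ℝ) ≤ (W:ℝ) ^ n := by positivity
        linarith
      have ha : 0 ≤ c W k * F k := mul_nonneg (hc _ _) (hF _)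
      calc c W k * F k * (((k:ℝ) + 1) ^ n - (W:ℝ) ^ n)
          ≤ c W k * F k * ((k:ℝ) + 1) ^ n := mul_le_mul_of_nonneg_left hXP ha
        _ ≤ (C * (W:ℝ) * (1 + (k:ℝ))) * F k * ((k:ℝ) + 1) ^ n := by
            apply mul_le_mul_of_nonneg_right _ hP
            exact mul_le_mul_of_nonneg_right (hcC W k) (hF k)
        _ = (C * (W:ℝ)) * ((1 + (k:ℝ)) ^ (n + 1) * F k) := by
            rw [pow_succ]; ring
    rw [tsum_mul_left] at hle
    exact hle
  -- make the four sums opaque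
  generalize hS1def : (∑' k : ℕ, c (k + 1) W * F (k + 1)) = S1
  generalize hS2def : (∑' k : ℕ, c W k * F k) = S2
  generalize hBdef :
    (∑' k : ℕ, c W k * F k * ((((k : ℤ) + 1) ^ n - (W : ℤ) ^ n : ℤ) : ℝ)) = B
  generalize hTdef : (∑' k : ℕ, (1 + (k : ℝ)) ^ (n + 1) * F k) = T
  rw [hS1def] at hS1nn hS1b
  rw [hS2def] at hS2nn
  rw [hBdef, hTdef] at hB2b
  rw [hTdef] at hTnn
  clear hS1def hS2def hBdef hTdef hsmom hmom hDcast hEcast hF hFfin hF1 hFρ hc0 hcC F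
  -- abbreviations for the increments
  have hDnn : 0 ≤ ((W:ℝ) + 1) ^ n - (W:ℝ) ^ n := by
    have := pow_le_pow_left₀ hw0.le (by linarith : (W:ℝ) ≤ (W:ℝ) + 1) n
    linarith
  have hEnp : ((W:ℝ) - 1) ^ n - (W:ℝ) ^ n ≤ 0 := by
    have := pow_le_pow_left₀ (by linarith : (0:ℝ) ≤ (W:ℝ) - 1)
      (by linarith : (W:ℝ) - 1 ≤ (W:ℝ)) n
    linarith
  generalize hDdef : ((W:ℝ) + 1) ^ n - (W:ℝ) ^ n = D at hDnn ⊢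
  generalize hEdef : ((W:ℝ) - 1) ^ n - (W:ℝ) ^ n = E at hEnp ⊢
  generalize hrdef : (L:ℝ) / ((L:ℝ) - 1) = r at hr0 hr2 ⊢
  -- bracket nonneg by convexity
  have hbr : 0 ≤ (((W:ℝ) + 1) / (W:ℝ)) * D + (((W:ℝ) - 1) / (W:ℝ)) * E := by
    have h2 := drift_pow2 (W:ℝ) hw1 (n + 1)
    rw [pow_succ, pow_succ, pow_succ] at h2
    have key : 0 ≤ ((W:ℝ) + 1) * D + ((W:ℝ) - 1) * E := by
      rw [← hDdef, ← hEdef]; nlinarith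
    have heq : (((W:ℝ) + 1) / (W:ℝ)) * D + (((W:ℝ) - 1) / (W:ℝ)) * E
        = (((W:ℝ) + 1) * D + ((W:ℝ) - 1) * E) / (W:ℝ) := by ring
    rw [heq]
    exact div_nonneg key hw0.le
  -- term A bound
  have hA : r * S1 * D ≤ 2 * C * ρ * n * 2 ^ n * (W:ℝ) ^ n := by
    have h1 : r * S1 ≤ 2 * (C * (1 + (W:ℝ)) * ρ) := by
      nlinarith [mul_le_mul hr2 hS1b hS1nn (by norm_num : (0:ℝ) ≤ 2)]
    have h2 : r * S1 * D ≤ 2 * (C * (1 + (W:ℝ)) * ρ) * D :=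
      mul_le_mul_of_nonneg_right h1 hDnn
    have h3 : (1 + (W:ℝ)) * D ≤ n * (1 + (W:ℝ)) ^ n := by
      have hd := drift_pow1 (W:ℝ) hw0.le n
      rw [← hDdef]
      calc (1 + (W:ℝ)) * (((W:ℝ) + 1) ^ n - (W:ℝ) ^ n) ≤ n * ((W:ℝ) + 1) ^ n := hd
        _ = n * (1 + (W:ℝ)) ^ n := by ring_nf
    have h4 : (1 + (W:ℝ)) ^ n ≤ 2 ^ n * (W:ℝ) ^ n := by
      calc (1 + (W:ℝ)) ^ n ≤ (2 * (W:ℝ)) ^ n :=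
            pow_le_pow_left₀ (by linarith) (by linarith) n
        _ = 2 ^ n * (W:ℝ) ^ n := mul_pow _ _ _
    have hnn : (0:ℝ) ≤ n := Nat.cast_nonneg n
    calc r * S1 * D ≤ 2 * (C * (1 + (W:ℝ)) * ρ) * D := h2
      _ = 2 * C * ρ * ((1 + (W:ℝ)) * D) := by ring
      _ ≤ 2 * C * ρ * (n * (1 + (W:ℝ)) ^ n) := by
          apply mul_le_mul_of_nonneg_left h3 (by positivity)
      _ ≤ 2 * C * ρ * (n * (2 ^ n * (W:ℝ) ^ n)) := by
          apply mul_le_mul_of_nonneg_left _ (by positivity)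
          exact mul_le_mul_of_nonneg_left h4 hnn
      _ = 2 * C * ρ * n * 2 ^ n * (W:ℝ) ^ n := by ring
  -- term B bound
  have hB : r * ((((W:ℝ) - 1) / (W:ℝ)) * S2 * E + (1 / (W:ℝ)) * B) ≤ 2 * C * T := by
    have hB1 : (((W:ℝ) - 1) / (W:ℝ)) * S2 * E ≤ 0 :=
      mul_nonpos_of_nonneg_of_nonpos
        (mul_nonneg (div_nonneg (by linarith) hw0.le) hS2nn) hEnp
    have hB2 : (1 / (W:ℝ)) * B ≤ C * T := by
      have h1 := mul_le_mul_of_nonneg_left hB2b (by positivity : (0:ℝ) ≤ 1 / (W:ℝ))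
      calc (1 / (W:ℝ)) * B ≤ (1 / (W:ℝ)) * (C * (W:ℝ) * T) := h1
        _ = C * T := by field_simp
    have hCT : 0 ≤ C * T := mul_nonneg hC.le hTnn
    nlinarith [mul_nonneg hr0 (sub_nonneg.mpr (by linarith : (((W:ℝ) - 1) / (W:ℝ)) * S2 * E + (1 / (W:ℝ)) * B ≤ C * T)),
      mul_nonneg (sub_nonneg.mpr hr2) hCT]
  -- subtracted term nonneg
  have hCsub : 0 ≤ (1 / ((L:ℝ) - 1)) * c W W *
      ((((W:ℝ) + 1) / (W:ℝ)) * D + (((W:ℝ) - 1) / (W:ℝ)) * E) :=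
    mul_nonneg (mul_nonneg (by positivity) (hc _ _)) hbr
  -- conclusion
  have hWn : (0:ℝ) ≤ (W:ℝ) ^ n := by positivity
  have hc1 : (0:ℝ) ≤ (2 * C + 1) * (W:ℝ) ^ n := by positivity
  have hc2 : (0:ℝ) ≤ (2 * C * ρ * n * 2 ^ n + 1) * T :=
    mul_nonneg (by positivity) hTnn
  have hc3 : (0:ℝ) ≤ 2 * C * ρ * n * 2 ^ n + 2 * C + 1 := by positivity
  nlinarith [hA, hB, hCsub, hc1, hc2, hc3]
end

section
/- Let C, ρ > 0 and set C̄ := 2·C·(1+3ρ). Then for all integers n ≥ 1 and M ≥ 1, and every F : ℕ → [0,∞) with Σ_k F_k = 1, Σ_k k·F_k ≤ ρ and Σ_k (1+k)³·F_k < ∞, one has C̄·n·( ((n+1)∧M)² − (n∧M)² ) + 2·C·Σ_{k≥0} (1+k)·F_k·( ((2n+k)∧M)² − (n∧M)² ) ≤ 6·C̄·(n∧M)² + 2·C·Σ_{k≥0}(1+k)³·F_k + 8·C·(n∧M)·Σ_{k≥0}(1+k)²·F_k, where a∧b denotes the minimum of a and b. -/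
/-- Key drift estimate for the dominating coupling process applied to
the truncated square function `g_M(m) = (m ∧ M)²`. -/
theorem stmt_5 (C ρ : ℝ) (hC : 0 < C) (hρ : 0 < ρ)
    (n M : ℕ) (hn : 1 ≤ n) (hM : 1 ≤ M)
    (F : ℕ → ℝ) (hF : ∀ k, 0 ≤ F k)
    (hF1 : (∑' k : ℕ, F k) = 1) (hFρ : (∑' k : ℕ, (k : ℝ) * F k) ≤ ρ)
    (hF3 : Summable (fun k : ℕ => (1 + (k : ℝ)) ^ 3 * F k)) :
    (2 * C * (1 + 3 * ρ)) * n *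
        (((min (n + 1) M : ℕ) : ℝ) ^ 2 - ((min n M : ℕ) : ℝ) ^ 2)
      + 2 * C * ∑' k : ℕ, (1 + (k : ℝ)) * F k *
          (((min (2 * n + k) M : ℕ) : ℝ) ^ 2 - ((min n M : ℕ) : ℝ) ^ 2)
    ≤ 6 * (2 * C * (1 + 3 * ρ)) * ((min n M : ℕ) : ℝ) ^ 2
      + 2 * C * (∑' k : ℕ, (1 + (k : ℝ)) ^ 3 * F k)
      + 8 * C * ((min n M : ℕ) : ℝ) * ∑' k : ℕ, (1 + (k : ℝ)) ^ 2 * F k := by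
  set m : ℕ := min n M with hm
  have hm1 : 1 ≤ m := le_min hn hM
  have hmr : (1:ℝ) ≤ (m:ℝ) := by exact_mod_cast hm1
  have h1k : ∀ k : ℕ, (1:ℝ) ≤ 1 + (k:ℝ) := fun k =>
    le_add_of_nonneg_right (Nat.cast_nonneg k)
  have hknn : ∀ k : ℕ, (0:ℝ) ≤ (k:ℝ) := fun k => Nat.cast_nonneg k
  -- summability facts
  have h2 : Summable (fun k : ℕ => (1 + (k:ℝ))^2 * F k) := by
    refine Summable.of_nonneg_of_le
      (fun k => mul_nonneg (by positivity) (hF k)) (fun k => ?_) hF3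
    exact mul_le_mul_of_nonneg_right (pow_le_pow_right₀ (h1k k) (by norm_num)) (hF k)
  have h1 : Summable (fun k : ℕ => (1 + (k:ℝ)) * F k) := by
    refine Summable.of_nonneg_of_le
      (fun k => mul_nonneg (by linarith [h1k k]) (hF k)) (fun k => ?_) hF3
    calc (1 + (k:ℝ)) * F k = (1 + (k:ℝ))^1 * F k := by ring
    _ ≤ (1 + (k:ℝ))^3 * F k :=
      mul_le_mul_of_nonneg_right (pow_le_pow_right₀ (h1k k) (by norm_num)) (hF k)
  have hF0 : Summable F := by
    refine Summable.of_nonneg_of_le hF (fun k => ?_) h1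
    nlinarith [hF k, h1k k]
  have hks : Summable (fun k : ℕ => (k:ℝ) * F k) := by
    refine Summable.of_nonneg_of_le (fun k => mul_nonneg (hknn k) (hF k))
      (fun k => ?_) h1
    nlinarith [hF k]
  have hS1 : (∑' k : ℕ, (1 + (k:ℝ)) * F k) ≤ 1 + ρ := by
    have : (∑' k : ℕ, (1 + (k:ℝ)) * F k) = (∑' k : ℕ, F k) + ∑' k : ℕ, (k:ℝ) * F k := by
      rw [← Summable.tsum_add hF0 hks]; congr 1; ext k; ring
    rw [this, hF1]; linarith
  -- pointwise bound for the sum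
  set g : ℕ → ℝ := fun k => (1 + (k:ℝ)) * F k *
      (((min (2 * n + k) M : ℕ) : ℝ) ^ 2 - ((m : ℕ) : ℝ) ^ 2) with hg
  set b : ℕ → ℝ := fun k => (1 + (k:ℝ))^3 * F k + 4 * (m:ℝ) * ((1 + (k:ℝ))^2 * F k)
      + 3 * (m:ℝ)^2 * ((1 + (k:ℝ)) * F k) with hb
  have hgb : ∀ k, g k ≤ b k := by
    intro k
    have hnat : min (2 * n + k) M ≤ 2 * m + k := by omega
    have hnat2 : m ≤ min (2 * n + k) M := by omega
    have hc : ((min (2 * n + k) M : ℕ) : ℝ) ≤ 2 * (m:ℝ) + k := by exact_mod_cast hnat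
    have hc2 : ((m:ℕ):ℝ) ≤ ((min (2 * n + k) M : ℕ) : ℝ) := by exact_mod_cast hnat2
    have hd : ((min (2 * n + k) M : ℕ) : ℝ) ^ 2 - ((m : ℕ) : ℝ) ^ 2
        ≤ (1 + (k:ℝ))^2 + 4 * (m:ℝ) * (1 + (k:ℝ)) + 3 * (m:ℝ)^2 := by
      nlinarith [hc, hc2, hmr, hknn k]
    have key := mul_le_mul_of_nonneg_left hd
      (mul_nonneg (show (0:ℝ) ≤ 1 + (k:ℝ) by linarith [h1k k]) (hF k))
    simp only [hg, hb]
    refine le_trans (le_of_eq (by ring)) (le_trans key (le_of_eq (by ring)))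
  have hgnn : ∀ k, 0 ≤ g k := by
    intro k
    have hnat2 : m ≤ min (2 * n + k) M := by omega
    have hc2 : ((m:ℕ):ℝ) ≤ ((min (2 * n + k) M : ℕ) : ℝ) := by exact_mod_cast hnat2
    have hd0 : (0:ℝ) ≤ ((min (2 * n + k) M : ℕ) : ℝ) ^ 2 - ((m : ℕ) : ℝ) ^ 2 := by
      nlinarith [hc2, hmr]
    exact mul_nonneg (mul_nonneg (by linarith [h1k k]) (hF k)) hd0
  have hbs : Summable b := ((hF3.add (h2.mul_left _)).add (h1.mul_left _))
  have htb : (∑' k, g k) ≤ (∑' k : ℕ, (1 + (k:ℝ))^3 * F k)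
      + 4 * (m:ℝ) * (∑' k : ℕ, (1 + (k:ℝ))^2 * F k)
      + 3 * (m:ℝ)^2 * (∑' k : ℕ, (1 + (k:ℝ)) * F k) := by
    have hgs : Summable g := Summable.of_nonneg_of_le hgnn hgb hbs
    have h := Summable.tsum_le_tsum hgb hgs hbs
    rwa [Summable.tsum_add (hF3.add (h2.mul_left _)) (h1.mul_left _),
      Summable.tsum_add hF3 (h2.mul_left _), tsum_mul_left, tsum_mul_left] at h
  -- first term bound
  have hC' : (0:ℝ) < 2 * C * (1 + 3 * ρ) := by positivity
  have hterm1 : (2 * C * (1 + 3 * ρ)) * n *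
      (((min (n + 1) M : ℕ) : ℝ) ^ 2 - ((m : ℕ) : ℝ) ^ 2)
      ≤ 3 * (2 * C * (1 + 3 * ρ)) * ((m:ℕ):ℝ)^2 := by
    rcases le_or_gt M n with h | h
    · have e1 : min (n + 1) M = M := by omega
      have e2 : m = M := by omega
      rw [e1, e2]
      have : ((M:ℕ):ℝ)^2 - ((M:ℕ):ℝ)^2 = 0 := by ring
      rw [this, mul_zero]
      positivity
    · have e1 : min (n + 1) M = n + 1 := by omega
      have e2 : m = n := by omega
      rw [e1, e2]
      have hnr : (1:ℝ) ≤ (n:ℝ) := by exact_mod_cast hn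
      push_cast
      nlinarith [mul_nonneg hC'.le (by nlinarith : (0:ℝ) ≤ (n:ℝ)^2 - n)]
  -- combine
  have h2C : (0:ℝ) ≤ 2 * C := by linarith
  have hsq : (0:ℝ) ≤ (m:ℝ)^2 := sq_nonneg _
  have hmul : 2 * C * (∑' k, g k)
      ≤ 2 * C * (∑' k : ℕ, (1 + (k:ℝ))^3 * F k)
        + 8 * C * (m:ℝ) * (∑' k : ℕ, (1 + (k:ℝ))^2 * F k)
        + 6 * C * (m:ℝ)^2 * (∑' k : ℕ, (1 + (k:ℝ)) * F k) := by
    calc 2 * C * (∑' k, g k)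
        ≤ 2 * C * ((∑' k : ℕ, (1 + (k:ℝ))^3 * F k)
          + 4 * (m:ℝ) * (∑' k : ℕ, (1 + (k:ℝ))^2 * F k)
          + 3 * (m:ℝ)^2 * (∑' k : ℕ, (1 + (k:ℝ)) * F k)) :=
        mul_le_mul_of_nonneg_left htb h2C
      _ = _ := by ring
  have h6 : 6 * C * (m:ℝ)^2 * (∑' k : ℕ, (1 + (k:ℝ)) * F k)
      ≤ 6 * C * (m:ℝ)^2 * (1 + ρ) :=
    mul_le_mul_of_nonneg_left hS1 (by positivity)
  nlinarith [hterm1, hmul, h6, mul_nonneg (mul_nonneg hC.le hρ.le) hsq]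
end

section
/- Let C, ρ, K > 0, let L ≥ 2 be an integer, let Λ be a finite set with |Λ| = L, and let η : Λ → ℕ satisfy Σ_{x∈Λ} η_x ≤ ρ·L. Let h : ℕ → ℝ be Lipschitz with constant K, i.e. |h(a) − h(b)| ≤ K·|a − b| for all a,b ∈ ℕ. Then | (1/(L·(L−1))) · Σ_{x∈Λ} Σ_{y∈Λ, y≠x} c(η_x, η_y)·[ (h(η_x−1) − h(η_x)) + (h(η_y+1) − h(η_y)) ] | ≤ 4·C·K·ρ·(1+ρ), where the term with η_x = 0 vanishes because c(0, η_y) = 0. -/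
/-- Uniform bound on the complete-graph generator applied to the empirical
average of a Lipschitz function: `|ℒH(η)| ≤ 4CKρ(1+ρ)`. -/
theorem stmt_8 (C ρ K : ℝ) (hC : 0 < C) (hρ : 0 < ρ) (hK : 0 < K)
    (c : ℕ → ℕ → ℝ)
    (hc_nonneg : ∀ k l, 0 ≤ c k l)
    (hc_zero : ∀ l, c 0 l = 0)
    (hc_sub : ∀ k l, c k l ≤ C * k * (1 + l))
    (L : ℕ) (hL : 2 ≤ L)
    (Λ : Type*) [Fintype Λ] [DecidableEq Λ]
    (hcard : Fintype.card Λ = L)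
    (η : Λ → ℕ)
    (hmass : (∑ x, (η x : ℝ)) ≤ ρ * L)
    (h : ℕ → ℝ)
    (hLip : ∀ a b : ℕ, |h a - h b| ≤ K * |(a : ℝ) - (b : ℝ)|) :
    |(1 / ((L : ℝ) * ((L : ℝ) - 1))) *
        ∑ x, ∑ y ∈ Finset.univ.erase x,
          c (η x) (η y) * ((h (η x - 1) - h (η x)) + (h (η y + 1) - h (η y)))|
    ≤ 4 * C * K * ρ * (1 + ρ) := by
  have hL1 : (1 : ℝ) ≤ (L : ℝ) - 1 := by
    have : (2 : ℝ) ≤ (L : ℝ) := by exact_mod_cast hL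
    linarith
  have hLpos : (0 : ℝ) < (L : ℝ) := by positivity
  have hLL : (0 : ℝ) < (L : ℝ) * ((L : ℝ) - 1) := by nlinarith
  -- per-term bound
  have hterm : ∀ x y : Λ,
      |c (η x) (η y) * ((h (η x - 1) - h (η x)) + (h (η y + 1) - h (η y)))|
        ≤ 2 * C * K * (η x : ℝ) * (1 + (η y : ℝ)) := by
    intro x y
    rw [abs_mul, abs_of_nonneg (hc_nonneg _ _)]
    have h1 : |h (η x - 1) - h (η x)| ≤ K := by
      have := hLip (η x - 1) (η x)
      rcases Nat.eq_zero_or_pos (η x) with h0 | h0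
      · simp only [h0, Nat.zero_sub]
        simp only [sub_self, abs_zero]
        linarith
      · have : |h (η x - 1) - h (η x)| ≤ K * |((η x - 1 : ℕ) : ℝ) - (η x : ℝ)| := this
        have hcast : ((η x - 1 : ℕ) : ℝ) = (η x : ℝ) - 1 := by
          push_cast [Nat.cast_sub h0]; ring
        rw [hcast] at this
        calc |h (η x - 1) - h (η x)| ≤ K * |(η x : ℝ) - 1 - η x| := this
          _ = K := by rw [show ((η x : ℝ) - 1 - η x) = -1 by ring]; simp
    have h2 : |h (η y + 1) - h (η y)| ≤ K := by
      have := hLip (η y + 1) (η y)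
      have hcast : ((η y + 1 : ℕ) : ℝ) - (η y : ℝ) = 1 := by push_cast; ring
      rw [hcast] at this; simpa using this
    have habs : |(h (η x - 1) - h (η x)) + (h (η y + 1) - h (η y))| ≤ 2 * K := by
      calc |(h (η x - 1) - h (η x)) + (h (η y + 1) - h (η y))|
          ≤ |h (η x - 1) - h (η x)| + |h (η y + 1) - h (η y)| := abs_add_le _ _
        _ ≤ 2 * K := by linarith
    calc c (η x) (η y) * |(h (η x - 1) - h (η x)) + (h (η y + 1) - h (η y))|
        ≤ (C * (η x : ℝ) * (1 + (η y : ℝ))) * (2 * K) := by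
          apply mul_le_mul (hc_sub _ _) habs (abs_nonneg _)
          positivity
      _ = 2 * C * K * (η x : ℝ) * (1 + (η y : ℝ)) := by ring
  -- bound the double sum
  set S := ∑ x, ∑ y ∈ Finset.univ.erase x,
      c (η x) (η y) * ((h (η x - 1) - h (η x)) + (h (η y + 1) - h (η y))) with hS
  have hsum : |S| ≤ 2 * C * K * (ρ * L) * ((L : ℝ) + ρ * L) := by
    have step1 : |S| ≤ ∑ x, ∑ y ∈ Finset.univ.erase x,
        2 * C * K * (η x : ℝ) * (1 + (η y : ℝ)) := by
      refine (Finset.abs_sum_le_sum_abs _ _).trans ?_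
      refine Finset.sum_le_sum fun x _ => ?_
      refine (Finset.abs_sum_le_sum_abs _ _).trans ?_
      exact Finset.sum_le_sum fun y _ => hterm x y
    have step2 : ∑ x, ∑ y ∈ Finset.univ.erase x,
        2 * C * K * (η x : ℝ) * (1 + (η y : ℝ))
        ≤ ∑ x, ∑ y : Λ, 2 * C * K * (η x : ℝ) * (1 + (η y : ℝ)) := by
      refine Finset.sum_le_sum fun x _ => ?_
      refine Finset.sum_le_sum_of_subset_of_nonneg (Finset.erase_subset _ _) ?_
      intro y _ _; positivity
    have step3 : ∑ x, ∑ y : Λ, 2 * C * K * (η x : ℝ) * (1 + (η y : ℝ))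
        = 2 * C * K * (∑ x, (η x : ℝ)) * ((L : ℝ) + ∑ y, (η y : ℝ)) := by
      have hx : ∀ x : Λ, ∑ y : Λ, 2 * C * K * (η x : ℝ) * (1 + (η y : ℝ))
          = 2 * C * K * (η x : ℝ) * ((L : ℝ) + ∑ y, (η y : ℝ)) := by
        intro x
        rw [← Finset.mul_sum]
        congr 1
        simp [Finset.sum_add_distrib, hcard]
      rw [Finset.sum_congr rfl fun x _ => hx x, ← Finset.sum_mul, ← Finset.mul_sum]
    have hmass' : (0 : ℝ) ≤ ∑ x, (η x : ℝ) := by positivity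
    calc |S| ≤ 2 * C * K * (∑ x, (η x : ℝ)) * ((L : ℝ) + ∑ y, (η y : ℝ)) := by
          rw [← step3]; exact step1.trans step2
      _ ≤ 2 * C * K * (ρ * L) * ((L : ℝ) + ρ * L) := by
          apply mul_le_mul
          · exact mul_le_mul_of_nonneg_left hmass (by positivity)
          · linarith
          · positivity
          · positivity
  rw [abs_mul, abs_of_pos (by positivity : (0:ℝ) < 1 / ((L : ℝ) * ((L : ℝ) - 1)))]
  rw [div_mul_eq_mul_div, one_mul, div_le_iff₀ hLL]
  calc |S| ≤ 2 * C * K * (ρ * L) * ((L : ℝ) + ρ * L) := hsum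
    _ = 2 * C * K * ρ * (1 + ρ) * ((L : ℝ) * (L : ℝ)) := by ring
    _ ≤ 4 * C * K * ρ * (1 + ρ) * ((L : ℝ) * ((L : ℝ) - 1)) := by
        have hkey : (L : ℝ) * (L : ℝ) ≤ 2 * ((L : ℝ) * ((L : ℝ) - 1)) := by nlinarith
        nlinarith [mul_pos (mul_pos (mul_pos hC hK) hρ) (by linarith : (0:ℝ) < 1 + ρ)]
end

section
/- Let C > 0 and let f : ℕ → [0,∞) satisfy Σ_{k≥0} (1+k)²·f_k < ∞. Define μ_k := Σ_{l≥0} c(k,l)·f_l and β_k := Σ_{l≥1} c(l,k)·f_l (both series converge absolutely), with the conventions f_{−1} = 0, β_{−1} = 0 and μ_0 = 0. Then the series Σ_{k≥0} k·[ μ_{k+1}·f_{k+1} + β_{k−1}·f_{k−1} − (μ_k + β_k)·f_k ] converges absolutely and equals 0. -/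
set_option maxHeartbeats 1000000 in
/-- The mean-field equation conserves the total mass `Σ_k k·f_k`:
the series `Σ_k k·[μ_{k+1}f_{k+1} + β_{k−1}f_{k−1} − (μ_k+β_k)f_k]`
converges absolutely and equals `0`. -/
theorem stmt_11 (C : ℝ) (hC : 0 < C)
    (c : ℕ → ℕ → ℝ)
    (hc_nonneg : ∀ k l, 0 ≤ c k l)
    (hc_zero : ∀ l, c 0 l = 0)
    (hc_sub : ∀ k l, c k l ≤ C * k * (1 + l))
    (f : ℕ → ℝ) (hf : ∀ k, 0 ≤ f k)
    (hf2 : Summable (fun k : ℕ => (1 + (k : ℝ)) ^ 2 * f k))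
    (μ β : ℕ → ℝ)
    (hμ : ∀ k, μ k = ∑' l : ℕ, c k l * f l)
    (hβ : ∀ k, β k = ∑' l : ℕ, c (l + 1) k * f (l + 1)) :
    (∀ k, Summable (fun l : ℕ => c k l * f l))
    ∧ (∀ k, Summable (fun l : ℕ => c (l + 1) k * f (l + 1)))
    ∧ Summable (fun k : ℕ => (k : ℝ) *
        (μ (k + 1) * f (k + 1)
          + (if k = 0 then 0 else β (k - 1) * f (k - 1))
          - (μ k + β k) * f k))
    ∧ (∑' k : ℕ, (k : ℝ) *
        (μ (k + 1) * f (k + 1)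
          + (if k = 0 then 0 else β (k - 1) * f (k - 1))
          - (μ k + β k) * f k)) = 0 := by
  -- weighted summability of f
  have hw : Summable (fun l : ℕ => (1 + (l : ℝ)) * f l) := by
    apply hf2.of_nonneg_of_le
      (fun l => mul_nonneg (by positivity) (hf l))
    intro l
    have h1 : (0:ℝ) ≤ (l:ℝ) := Nat.cast_nonneg l
    nlinarith [mul_nonneg (mul_nonneg (add_nonneg zero_le_one h1) h1) (hf l)]
  set M : ℝ := ∑' l : ℕ, (1 + (l : ℝ)) * f l with hM
  have hM0 : 0 ≤ M :=
    tsum_nonneg (fun l => mul_nonneg (by positivity) (hf l))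
  -- first summability claim
  have hsum1 : ∀ k, Summable (fun l : ℕ => c k l * f l) := by
    intro k
    apply (hw.mul_left (C * k)).of_nonneg_of_le
      (fun l => mul_nonneg (hc_nonneg k l) (hf l))
    intro l
    nlinarith [mul_le_mul_of_nonneg_right (hc_sub k l) (hf l)]
  -- shifted weighted summability
  have hw' : Summable (fun l : ℕ => (1 + ((l+1 : ℕ) : ℝ)) * f (l + 1)) :=
    (summable_nat_add_iff 1).mpr hw
  -- second summability claim
  have hsum2 : ∀ k, Summable (fun l : ℕ => c (l + 1) k * f (l + 1)) := by
    intro k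
    apply (hw'.mul_left (C * (1 + k))).of_nonneg_of_le
      (fun l => mul_nonneg (hc_nonneg _ k) (hf _))
    intro l
    have h1 := mul_le_mul_of_nonneg_right (hc_sub (l+1) k) (hf (l+1))
    have h2 : ((l+1 : ℕ) : ℝ) = (l : ℝ) + 1 := by push_cast; ring
    rw [h2] at h1 ⊢
    have h3 : (0:ℝ) ≤ C * (1 + (k:ℝ)) := by positivity
    nlinarith [mul_nonneg h3 (hf (l+1))]
  -- bounds on μ and β
  have hμ0 : ∀ k, 0 ≤ μ k := fun k => by
    rw [hμ k]; exact tsum_nonneg (fun l => mul_nonneg (hc_nonneg k l) (hf l))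
  have hβ0 : ∀ k, 0 ≤ β k := fun k => by
    rw [hβ k]; exact tsum_nonneg (fun l => mul_nonneg (hc_nonneg _ k) (hf _))
  have hμle : ∀ k, μ k ≤ C * k * M := by
    intro k
    rw [hμ k, hM]
    calc (∑' l : ℕ, c k l * f l) ≤ ∑' l : ℕ, (C * k) * ((1 + (l:ℝ)) * f l) := by
          apply Summable.tsum_le_tsum _ (hsum1 k) (hw.mul_left (C * k))
          intro l
          nlinarith [mul_le_mul_of_nonneg_right (hc_sub k l) (hf l)]
      _ = C * k * ∑' l : ℕ, (1 + (l:ℝ)) * f l := tsum_mul_left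
  have hshift_le : (∑' l : ℕ, (1 + ((l+1 : ℕ) : ℝ)) * f (l + 1)) ≤ M := by
    rw [hM, Summable.tsum_eq_zero_add hw]
    have : (0:ℝ) ≤ (1 + ((0:ℕ):ℝ)) * f 0 := mul_nonneg (by norm_num) (hf 0)
    linarith
  have hβle : ∀ k, β k ≤ C * (1 + k) * M := by
    intro k
    rw [hβ k]
    calc (∑' l : ℕ, c (l+1) k * f (l+1))
        ≤ ∑' l : ℕ, (C * (1 + k)) * ((1 + ((l+1:ℕ):ℝ)) * f (l + 1)) := by
          apply Summable.tsum_le_tsum _ (hsum2 k) (hw'.mul_left (C * (1 + k)))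
          intro l
          have h1 := mul_le_mul_of_nonneg_right (hc_sub (l+1) k) (hf (l+1))
          have h2 : ((l+1 : ℕ) : ℝ) = (l : ℝ) + 1 := by push_cast; ring
          rw [h2] at h1 ⊢
          have h3 : (0:ℝ) ≤ C * (1 + (k:ℝ)) := by positivity
          nlinarith [mul_nonneg h3 (hf (l+1))]
      _ = (C * (1 + k)) * ∑' l : ℕ, (1 + ((l+1:ℕ):ℝ)) * f (l + 1) := tsum_mul_left
      _ ≤ C * (1 + k) * M := by
          apply mul_le_mul_of_nonneg_left hshift_le
          positivity
  -- key summabilities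
  have Sg : Summable (fun k : ℕ => μ k * f k) := by
    apply (hf2.mul_left (C * M)).of_nonneg_of_le
      (fun k => mul_nonneg (hμ0 k) (hf k))
    intro k
    have h1 := mul_le_mul_of_nonneg_right (hμle k) (hf k)
    have h2 : (0:ℝ) ≤ (k:ℝ) := Nat.cast_nonneg k
    have a : (0:ℝ) ≤ C * M * f k := mul_nonneg (mul_nonneg hC.le hM0) (hf k)
    nlinarith [a, mul_nonneg a h2, mul_nonneg (mul_nonneg a h2) h2]
  have Sh : Summable (fun k : ℕ => β k * f k) := by
    apply (hf2.mul_left (C * M)).of_nonneg_of_le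
      (fun k => mul_nonneg (hβ0 k) (hf k))
    intro k
    have h1 := mul_le_mul_of_nonneg_right (hβle k) (hf k)
    have h2 : (0:ℝ) ≤ (k:ℝ) := Nat.cast_nonneg k
    have a : (0:ℝ) ≤ C * M * f k := mul_nonneg (mul_nonneg hC.le hM0) (hf k)
    nlinarith [a, mul_nonneg a h2, mul_nonneg (mul_nonneg a h2) h2]
  have Sv : Summable (fun k : ℕ => (k:ℝ) * (μ k * f k)) := by
    apply (hf2.mul_left (C * M)).of_nonneg_of_le
      (fun k => mul_nonneg (Nat.cast_nonneg k) (mul_nonneg (hμ0 k) (hf k)))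
    intro k
    have h2 : (0:ℝ) ≤ (k:ℝ) := Nat.cast_nonneg k
    have h1 := mul_le_mul_of_nonneg_left
      (mul_le_mul_of_nonneg_right (hμle k) (hf k)) h2
    have a : (0:ℝ) ≤ C * M * f k := mul_nonneg (mul_nonneg hC.le hM0) (hf k)
    nlinarith [a, mul_nonneg a h2, mul_nonneg (mul_nonneg a h2) h2]
  have Sw : Summable (fun k : ℕ => (k:ℝ) * (β k * f k)) := by
    apply (hf2.mul_left (C * M)).of_nonneg_of_le
      (fun k => mul_nonneg (Nat.cast_nonneg k) (mul_nonneg (hβ0 k) (hf k)))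
    intro k
    have h2 : (0:ℝ) ≤ (k:ℝ) := Nat.cast_nonneg k
    have h1 := mul_le_mul_of_nonneg_left
      (mul_le_mul_of_nonneg_right (hβle k) (hf k)) h2
    have a : (0:ℝ) ≤ C * M * f k := mul_nonneg (mul_nonneg hC.le hM0) (hf k)
    nlinarith [a, mul_nonneg a h2, mul_nonneg (mul_nonneg a h2) h2]
  -- summability of the target series pieces
  have hSv1 : Summable (fun k : ℕ => ((k+1 : ℕ):ℝ) * (μ (k+1) * f (k+1))) :=
    (summable_nat_add_iff 1).mpr Sv
  have hSg1 : Summable (fun k : ℕ => μ (k+1) * f (k+1)) :=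
    (summable_nat_add_iff 1).mpr Sg
  have SA : Summable (fun k : ℕ => (k:ℝ) * (μ (k+1) * f (k+1))) := by
    have : (fun k : ℕ => (k:ℝ) * (μ (k+1) * f (k+1)))
        = fun k : ℕ => ((k+1:ℕ):ℝ) * (μ (k+1) * f (k+1)) - μ (k+1) * f (k+1) := by
      funext k; push_cast; ring
    rw [this]; exact hSv1.sub hSg1
  have SB : Summable (fun k : ℕ =>
      (k:ℝ) * (if k = 0 then 0 else β (k - 1) * f (k - 1))) := by
    apply (summable_nat_add_iff 1).mp
    have : (fun n : ℕ => ((n+1 : ℕ):ℝ) *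
        (if n + 1 = 0 then 0 else β (n + 1 - 1) * f (n + 1 - 1)))
        = (fun n : ℕ => (n:ℝ) * (β n * f n) + β n * f n) := by
      funext n
      simp only [Nat.add_sub_cancel, Nat.succ_ne_zero, if_false]
      push_cast; ring
    exact this ▸ (Sw.add Sh)
  have ST : Summable (fun k : ℕ => (k : ℝ) *
      (μ (k + 1) * f (k + 1)
        + (if k = 0 then 0 else β (k - 1) * f (k - 1))
        - (μ k + β k) * f k)) := by
    have : (fun k : ℕ => (k : ℝ) *
        (μ (k + 1) * f (k + 1)
          + (if k = 0 then 0 else β (k - 1) * f (k - 1))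
          - (μ k + β k) * f k))
        = (fun k : ℕ => ((k:ℝ) * (μ (k+1) * f (k+1))
            + (k:ℝ) * (if k = 0 then 0 else β (k - 1) * f (k - 1)))
            - ((k:ℝ) * (μ k * f k) + (k:ℝ) * (β k * f k))) := by
      funext k; ring
    rw [this]
    exact (SA.add SB).sub (Sv.add Sw)
  refine ⟨hsum1, hsum2, ST, ?_⟩
  -- key identity: ∑ μ k f k = ∑ β k f k (Fubini)
  have hCk : Summable (fun k : ℕ => C * (k:ℝ) * f k) := by
    apply (hf2.mul_left C).of_nonneg_of_le
      (fun k => mul_nonneg (mul_nonneg hC.le (Nat.cast_nonneg k)) (hf k))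
    intro k
    have h2 : (0:ℝ) ≤ (k:ℝ) := Nat.cast_nonneg k
    have a : (0:ℝ) ≤ C * f k := mul_nonneg hC.le (hf k)
    nlinarith [a, mul_nonneg a h2, mul_nonneg (mul_nonneg a h2) h2]
  have hF : Summable (fun p : ℕ × ℕ => c p.1 p.2 * f p.2 * f p.1) := by
    have hprod : Summable
        (fun p : ℕ × ℕ => (C * (p.1:ℝ) * f p.1) * ((1 + (p.2:ℝ)) * f p.2)) :=
      hCk.mul_of_nonneg hw
        (fun k => mul_nonneg (mul_nonneg hC.le (Nat.cast_nonneg k)) (hf k))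
        (fun l => mul_nonneg (by positivity) (hf l))
    apply hprod.of_norm_bounded
    intro p
    rw [Real.norm_eq_abs,
      abs_of_nonneg (mul_nonneg (mul_nonneg (hc_nonneg _ _) (hf _)) (hf _))]
    nlinarith [mul_le_mul_of_nonneg_right
      (mul_le_mul_of_nonneg_right (hc_sub p.1 p.2) (hf p.2)) (hf p.1)]
  have key : (∑' k : ℕ, μ k * f k) = ∑' k : ℕ, β k * f k := by
    have hL : (∑' k : ℕ, μ k * f k) = ∑' k : ℕ, ∑' l : ℕ, c k l * f l * f k := by
      congr 1; funext k
      rw [hμ k, ← tsum_mul_right]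
    have hswap : (∑' k : ℕ, ∑' l : ℕ, c k l * f l * f k)
        = ∑' l : ℕ, ∑' k : ℕ, c k l * f l * f k :=
      (Summable.tsum_comm (f := fun k l : ℕ => c k l * f l * f k) (by exact hF)).symm
    have hRinner : ∀ l : ℕ, (∑' k : ℕ, c k l * f l * f k) = β l * f l := by
      intro l
      have hsinner : Summable (fun k : ℕ => c k l * f l * f k) := by
        have := hF.prod_symm.prod_factor l
        simpa using this
      rw [Summable.tsum_eq_zero_add hsinner]
      simp only [hc_zero, zero_mul, zero_add]
      rw [hβ l, ← tsum_mul_right]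
      congr 1; funext k; ring
    rw [hL, hswap]
    congr 1; funext l; exact hRinner l
  have hμzero : μ 0 = 0 := by rw [hμ 0]; simp [hc_zero]
  -- tsum of the A part
  have hA : (∑' k : ℕ, (k:ℝ) * (μ (k+1) * f (k+1)))
      = (∑' k : ℕ, (k:ℝ) * (μ k * f k)) - ∑' k : ℕ, μ k * f k := by
    have e1 : (∑' k : ℕ, (k:ℝ) * (μ (k+1) * f (k+1)))
        = (∑' k : ℕ, ((k+1:ℕ):ℝ) * (μ (k+1) * f (k+1)))
          - ∑' k : ℕ, μ (k+1) * f (k+1) := by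
      rw [← Summable.tsum_sub hSv1 hSg1]
      congr 1; funext k; push_cast; ring
    have e2 : (∑' k : ℕ, ((k+1:ℕ):ℝ) * (μ (k+1) * f (k+1)))
        = ∑' k : ℕ, (k:ℝ) * (μ k * f k) := by
      rw [Summable.tsum_eq_zero_add Sv]
      push_cast
      ring
    have e3 : (∑' k : ℕ, μ (k+1) * f (k+1)) = ∑' k : ℕ, μ k * f k := by
      rw [Summable.tsum_eq_zero_add Sg, hμzero]
      ring
    rw [e1, e2, e3]
  -- tsum of the B part
  have hB : (∑' k : ℕ, (k:ℝ) * (if k = 0 then 0 else β (k - 1) * f (k - 1)))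
      = (∑' k : ℕ, (k:ℝ) * (β k * f k)) + ∑' k : ℕ, β k * f k := by
    rw [Summable.tsum_eq_zero_add SB]
    simp only [Nat.add_sub_cancel, Nat.succ_ne_zero, if_false, Nat.cast_zero,
      zero_mul, zero_add]
    rw [← Summable.tsum_add Sw Sh]
    congr 1; funext k; push_cast; ring
  have split : (∑' k : ℕ, (k : ℝ) *
      (μ (k + 1) * f (k + 1)
        + (if k = 0 then 0 else β (k - 1) * f (k - 1))
        - (μ k + β k) * f k))
      = ((∑' k : ℕ, (k:ℝ) * (μ (k+1) * f (k+1)))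
          + ∑' k : ℕ, (k:ℝ) * (if k = 0 then 0 else β (k - 1) * f (k - 1)))
        - ((∑' k : ℕ, (k:ℝ) * (μ k * f k)) + ∑' k : ℕ, (k:ℝ) * (β k * f k)) := by
    rw [← Summable.tsum_add SA SB, ← Summable.tsum_add Sv Sw, ← Summable.tsum_sub (SA.add SB) (Sv.add Sw)]
    congr 1; funext k; ring
  rw [split, hA, hB, key]
  ring
end

section
/- Let C > 0 and let f : ℕ → [0,∞) satisfy Σ_{k≥0} (1+k)·f_k < ∞. Define μ_k := Σ_{l≥0} c(k,l)·f_l and β_k := Σ_{l≥1} c(l,k)·f_l, with the conventions f_{−1} = 0, β_{−1} = 0 and μ_0 = 0. Then the series Σ_{k≥0} [ μ_{k+1}·f_{k+1} + β_{k−1}·f_{k−1} − (μ_k + β_k)·f_k ] converges absolutely and equals 0. -/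
/-- The mean-field equation conserves the total probability `Σ_k f_k`:
the series `Σ_k [μ_{k+1}f_{k+1} + β_{k−1}f_{k−1} − (μ_k+β_k)f_k]`
converges absolutely and equals `0`. -/
theorem stmt_12 (C : ℝ) (hC : 0 < C)
    (c : ℕ → ℕ → ℝ)
    (hc_nonneg : ∀ k l, 0 ≤ c k l)
    (hc_zero : ∀ l, c 0 l = 0)
    (hc_sub : ∀ k l, c k l ≤ C * k * (1 + l))
    (f : ℕ → ℝ) (hf : ∀ k, 0 ≤ f k)
    (hf1 : Summable (fun k : ℕ => (1 + (k : ℝ)) * f k))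
    (μ β : ℕ → ℝ)
    (hμ : ∀ k, μ k = ∑' l : ℕ, c k l * f l)
    (hβ : ∀ k, β k = ∑' l : ℕ, c (l + 1) k * f (l + 1)) :
    Summable (fun k : ℕ =>
        μ (k + 1) * f (k + 1)
          + (if k = 0 then 0 else β (k - 1) * f (k - 1))
          - (μ k + β k) * f k)
    ∧ (∑' k : ℕ,
        (μ (k + 1) * f (k + 1)
          + (if k = 0 then 0 else β (k - 1) * f (k - 1))
          - (μ k + β k) * f k)) = 0 := by
  set S : ℝ := ∑' l : ℕ, (1 + (l : ℝ)) * f l with hSdef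
  have hS0 : 0 ≤ S := tsum_nonneg fun l => mul_nonneg (by positivity) (hf l)
  -- summability of the μ series
  have hck : ∀ k : ℕ, Summable (fun l : ℕ => c k l * f l) := by
    intro k
    have hb : Summable (fun l : ℕ => C * k * ((1 + (l : ℝ)) * f l)) := hf1.mul_left (C * k)
    refine Summable.of_nonneg_of_le (fun l => mul_nonneg (hc_nonneg k l) (hf l))
      (fun l => ?_) hb
    calc c k l * f l ≤ (C * k * (1 + l)) * f l :=
          mul_le_mul_of_nonneg_right (hc_sub k l) (hf l)
      _ = C * k * ((1 + (l : ℝ)) * f l) := by ring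
  have hμle : ∀ k : ℕ, μ k ≤ C * k * S := by
    intro k
    rw [hμ k]
    calc (∑' l : ℕ, c k l * f l) ≤ ∑' l : ℕ, C * k * ((1 + (l : ℝ)) * f l) := by
          refine Summable.tsum_le_tsum (fun l => ?_) (hck k) (hf1.mul_left (C * k))
          calc c k l * f l ≤ (C * k * (1 + l)) * f l :=
                mul_le_mul_of_nonneg_right (hc_sub k l) (hf l)
            _ = C * k * ((1 + (l : ℝ)) * f l) := by ring
      _ = C * k * S := tsum_mul_left
  have hμ0 : ∀ k : ℕ, 0 ≤ μ k := fun k => by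
    rw [hμ k]; exact tsum_nonneg fun l => mul_nonneg (hc_nonneg k l) (hf l)
  have hg : Summable (fun k : ℕ => μ k * f k) := by
    refine Summable.of_nonneg_of_le (fun k => mul_nonneg (hμ0 k) (hf k))
      (fun k => ?_) (hf1.mul_left (C * S))
    have h1 : μ k * f k ≤ (C * k * S) * f k :=
      mul_le_mul_of_nonneg_right (hμle k) (hf k)
    have h2 : (C * (k : ℝ) * S) * f k ≤ C * S * ((1 + (k : ℝ)) * f k) := by
      nlinarith [mul_nonneg (mul_nonneg hC.le hS0) (hf k)]
    linarith
  -- tail sum bound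
  have htail : Summable (fun l : ℕ => (1 + ((l : ℝ) + 1)) * f (l + 1)) := by
    have := (summable_nat_add_iff 1).mpr hf1
    exact this.congr fun l => by push_cast; ring
  have hT : (∑' l : ℕ, (1 + ((l : ℝ) + 1)) * f (l + 1)) ≤ S := by
    have h := Summable.tsum_eq_zero_add hf1
    have h0 : (0 : ℝ) ≤ (1 + ((0 : ℕ) : ℝ)) * f 0 := mul_nonneg (by positivity) (hf 0)
    have heq : (∑' l : ℕ, (1 + (((l + 1 : ℕ)) : ℝ)) * f (l + 1))
        = ∑' l : ℕ, (1 + ((l : ℝ) + 1)) * f (l + 1) := by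
      refine tsum_congr fun l => by push_cast; ring
    rw [hSdef, h, ← heq]
    push_cast at h0 ⊢
    linarith
  -- β bounds
  have hckβ : ∀ k : ℕ, Summable (fun l : ℕ => c (l + 1) k * f (l + 1)) := by
    intro k
    refine Summable.of_nonneg_of_le (fun l => mul_nonneg (hc_nonneg _ _) (hf _))
      (fun l => ?_) (htail.mul_left (C * (1 + k)))
    calc c (l + 1) k * f (l + 1) ≤ (C * (l + 1) * (1 + k)) * f (l + 1) := by
          have := hc_sub (l + 1) k
          push_cast at this ⊢
          exact mul_le_mul_of_nonneg_right this (hf _)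
      _ ≤ C * (1 + k) * ((1 + ((l : ℝ) + 1)) * f (l + 1)) := by
          nlinarith [mul_nonneg hC.le (mul_nonneg (by positivity : (0:ℝ) ≤ 1 + (k:ℝ)) (hf (l+1)))]
  have hβle : ∀ k : ℕ, β k ≤ C * (1 + k) * S := by
    intro k
    rw [hβ k]
    calc (∑' l : ℕ, c (l + 1) k * f (l + 1))
        ≤ ∑' l : ℕ, C * (1 + k) * ((1 + ((l : ℝ) + 1)) * f (l + 1)) := by
          refine Summable.tsum_le_tsum (fun l => ?_) (hckβ k) (htail.mul_left (C * (1 + k)))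
          calc c (l + 1) k * f (l + 1) ≤ (C * (l + 1) * (1 + k)) * f (l + 1) := by
                have := hc_sub (l + 1) k
                push_cast at this ⊢
                exact mul_le_mul_of_nonneg_right this (hf _)
            _ ≤ C * (1 + k) * ((1 + ((l : ℝ) + 1)) * f (l + 1)) := by
                nlinarith [mul_nonneg hC.le (mul_nonneg (by positivity : (0:ℝ) ≤ 1 + (k:ℝ)) (hf (l+1)))]
      _ = C * (1 + k) * (∑' l : ℕ, (1 + ((l : ℝ) + 1)) * f (l + 1)) := tsum_mul_left
      _ ≤ C * (1 + k) * S := by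
          refine mul_le_mul_of_nonneg_left hT ?_
          positivity
  have hβ0 : ∀ k : ℕ, 0 ≤ β k := fun k => by
    rw [hβ k]; exact tsum_nonneg fun l => mul_nonneg (hc_nonneg _ _) (hf _)
  have hh : Summable (fun k : ℕ => β k * f k) := by
    refine Summable.of_nonneg_of_le (fun k => mul_nonneg (hβ0 k) (hf k))
      (fun k => ?_) (hf1.mul_left (C * S))
    calc β k * f k ≤ (C * (1 + k) * S) * f k :=
          mul_le_mul_of_nonneg_right (hβle k) (hf k)
      _ = C * S * ((1 + (k : ℝ)) * f k) := by ring
  -- the three pieces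
  have hA : Summable (fun k : ℕ => μ (k + 1) * f (k + 1)) :=
    (summable_nat_add_iff 1).mpr hg
  set F : ℕ → ℝ := fun k => if k = 0 then 0 else β (k - 1) * f (k - 1) with hFdef
  have hFshift : ∀ n : ℕ, β n * f n = F (n + 1) := fun n => by simp [hFdef]
  have hF : Summable F := (summable_nat_add_iff 1).mp (hh.congr hFshift)
  have hD : Summable (fun k : ℕ => (μ k + β k) * f k) :=
    (hg.add hh).congr fun k => by ring
  have hsum : Summable (fun k : ℕ =>
      μ (k + 1) * f (k + 1) + F k - (μ k + β k) * f k) := (hA.add hF).sub hD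
  refine ⟨hsum, ?_⟩
  have hμ00 : μ 0 = 0 := by rw [hμ 0]; simp [hc_zero]
  have hAt : (∑' k : ℕ, μ (k + 1) * f (k + 1)) = ∑' k : ℕ, μ k * f k := by
    rw [Summable.tsum_eq_zero_add hg, hμ00]; ring
  have hFt : (∑' k : ℕ, F k) = ∑' k : ℕ, β k * f k := by
    rw [Summable.tsum_eq_zero_add hF]
    simp only [hFdef]
    rw [show (fun k : ℕ => if k + 1 = 0 then (0:ℝ) else β (k + 1 - 1) * f (k + 1 - 1))
        = fun k : ℕ => β k * f k from funext fun k => by simp]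
    simp
  have hDt : (∑' k : ℕ, (μ k + β k) * f k)
      = (∑' k : ℕ, μ k * f k) + ∑' k : ℕ, β k * f k := by
    rw [← Summable.tsum_add hg hh]
    exact tsum_congr fun k => by ring
  calc (∑' k : ℕ, (μ (k + 1) * f (k + 1) + F k - (μ k + β k) * f k))
      = (∑' k : ℕ, (μ (k + 1) * f (k + 1) + F k)) - ∑' k : ℕ, (μ k + β k) * f k :=
        Summable.tsum_sub (hA.add hF) hD
    _ = ((∑' k : ℕ, μ (k + 1) * f (k + 1)) + ∑' k : ℕ, F k)
        - ∑' k : ℕ, (μ k + β k) * f k := by rw [Summable.tsum_add hA hF]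
    _ = 0 := by rw [hAt, hFt, hDt]; ring
end

section
/- Let C > 0, ρ > 0 and let f : ℕ → [0,∞) satisfy Σ_{k≥0} (1+k)²·f_k < ∞. Define μ_k := Σ_{l≥0} c(k,l)·f_l, β_k := Σ_{l≥1} c(l,k)·f_l, and the size-biased quantities p_n := n·f_n/ρ for n ≥ 1. Then for every integer k ≥ 2, (k/(k+1))·μ_{k+1}·p_{k+1} + β_{k−1}·p_{k−1} + Σ_{n≥1} (1/n)·c(n,k−1)·f_{k−1}·p_n − [ ((k−1)/k)·μ_k + (1/k)·Σ_{n≥1} c(k,n−1)·f_{n−1} + β_k ]·p_k = (k/ρ)·[ μ_{k+1}·f_{k+1} + β_{k−1}·f_{k−1} − (μ_k + β_k)·f_k ], all series converging absolutely. In particular, Σ_{n≥1} (1/n)·c(n,k−1)·f_{k−1}·p_n = (1/(k−1))·β_{k−1}·p_{k−1} and Σ_{n≥1} c(k,n−1)·f_{n−1} = μ_k. -/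
/-- The size-biased quantities `p_k = k·f_k/ρ` solve the size-biased
mean-field equation: for `k ≥ 2` the master-equation form of the limiting
tagged-site generator equals `k/ρ` times the mean-field right-hand side. -/
theorem stmt_13 (C ρ : ℝ) (hC : 0 < C) (hρ : 0 < ρ)
    (c : ℕ → ℕ → ℝ)
    (hc_nonneg : ∀ k l, 0 ≤ c k l)
    (hc_zero : ∀ l, c 0 l = 0)
    (hc_sub : ∀ k l, c k l ≤ C * k * (1 + l))
    (f : ℕ → ℝ) (hf : ∀ k, 0 ≤ f k)
    (hf2 : Summable (fun k : ℕ => (1 + (k : ℝ)) ^ 2 * f k))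
    (μ β p : ℕ → ℝ)
    (hμ : ∀ j, μ j = ∑' l : ℕ, c j l * f l)
    (hβ : ∀ j, β j = ∑' l : ℕ, c (l + 1) j * f (l + 1))
    (hp : ∀ m, 1 ≤ m → p m = (m : ℝ) * f m / ρ)
    (k : ℕ) (hk : 2 ≤ k) :
    Summable (fun n : ℕ => (1 / ((n : ℝ) + 1)) * c (n + 1) (k - 1) * f (k - 1) * p (n + 1))
    ∧ Summable (fun n : ℕ => c k ((n + 1) - 1) * f ((n + 1) - 1))
    ∧ ((k : ℝ) / ((k : ℝ) + 1)) * μ (k + 1) * p (k + 1)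
        + β (k - 1) * p (k - 1)
        + (∑' n : ℕ, (1 / ((n : ℝ) + 1)) * c (n + 1) (k - 1) * f (k - 1) * p (n + 1))
        - ((((k : ℝ) - 1) / (k : ℝ)) * μ k
            + (1 / (k : ℝ)) * (∑' n : ℕ, c k ((n + 1) - 1) * f ((n + 1) - 1))
            + β k) * p k
      = ((k : ℝ) / ρ) *
          (μ (k + 1) * f (k + 1) + β (k - 1) * f (k - 1) - (μ k + β k) * f k)
    ∧ (∑' n : ℕ, (1 / ((n : ℝ) + 1)) * c (n + 1) (k - 1) * f (k - 1) * p (n + 1))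
        = (1 / ((k : ℝ) - 1)) * β (k - 1) * p (k - 1)
    ∧ (∑' n : ℕ, c k ((n + 1) - 1) * f ((n + 1) - 1)) = μ k := by

  have hρ' : ρ ≠ 0 := ne_of_gt hρ
  -- basic summability
  have hS1 : Summable (fun l : ℕ => (1 + (l : ℝ)) * f l) := by
    apply hf2.of_nonneg_of_le (fun l => mul_nonneg (by positivity) (hf l))
    intro l
    have h1 : (1 : ℝ) ≤ 1 + (l : ℝ) := by
      linarith [Nat.cast_nonneg (α := ℝ) l]
    have h0 : (0 : ℝ) ≤ (1 + (l : ℝ)) * f l := mul_nonneg (by positivity) (hf l)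
    calc (1 + (l : ℝ)) * f l = 1 * ((1 + (l : ℝ)) * f l) := by ring
      _ ≤ (1 + (l : ℝ)) * ((1 + (l : ℝ)) * f l) := mul_le_mul_of_nonneg_right h1 h0
      _ = (1 + (l : ℝ)) ^ 2 * f l := by ring
  have hSshift : Summable (fun l : ℕ => ((l : ℝ) + 2) * f (l + 1)) := by
    have := (summable_nat_add_iff 1).mpr hS1
    apply this.congr
    intro l
    push_cast
    ring
  have hβsum : ∀ j : ℕ, Summable (fun l : ℕ => c (l + 1) j * f (l + 1)) := by
    intro j
    apply (hSshift.mul_left (C * (1 + (j : ℝ)))).of_nonneg_of_le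
      (fun l => mul_nonneg (hc_nonneg _ _) (hf _))
    intro l
    have h1 : c (l + 1) j ≤ C * ((l : ℝ) + 1) * (1 + (j : ℝ)) := by
      have := hc_sub (l + 1) j; push_cast at this ⊢; linarith
    have h2 : C * ((l : ℝ) + 1) * (1 + (j : ℝ)) ≤ C * (1 + (j : ℝ)) * ((l : ℝ) + 2) := by
      nlinarith [Nat.cast_nonneg (α := ℝ) l, Nat.cast_nonneg (α := ℝ) j, hC.le]
    calc c (l + 1) j * f (l + 1) ≤ C * ((l : ℝ) + 1) * (1 + (j : ℝ)) * f (l + 1) :=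
          mul_le_mul_of_nonneg_right h1 (hf _)
      _ ≤ C * (1 + (j : ℝ)) * (((l : ℝ) + 2) * f (l + 1)) := by
          rw [← mul_assoc]; exact mul_le_mul_of_nonneg_right h2 (hf _)
  have hμsum : Summable (fun n : ℕ => c k n * f n) := by
    apply (hS1.mul_left (C * (k : ℝ))).of_nonneg_of_le
      (fun n => mul_nonneg (hc_nonneg _ _) (hf _))
    intro n
    have h1 : c k n ≤ C * (k : ℝ) * (1 + (n : ℝ)) := by
      have := hc_sub k n; push_cast at this ⊢; linarith
    calc c k n * f n ≤ C * (k : ℝ) * (1 + (n : ℝ)) * f n :=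
          mul_le_mul_of_nonneg_right h1 (hf _)
      _ = C * (k : ℝ) * ((1 + (n : ℝ)) * f n) := by ring
  -- rewrite the first series
  have hterm : ∀ n : ℕ, (1 / ((n : ℝ) + 1)) * c (n + 1) (k - 1) * f (k - 1) * p (n + 1)
      = (f (k - 1) / ρ) * (c (n + 1) (k - 1) * f (n + 1)) := by
    intro n
    rw [hp (n + 1) (by omega)]
    have hn : ((n : ℝ) + 1) ≠ 0 := by positivity
    push_cast
    field_simp
  have hsum1 : Summable (fun n : ℕ =>
      (1 / ((n : ℝ) + 1)) * c (n + 1) (k - 1) * f (k - 1) * p (n + 1)) := by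
    exact ((hβsum (k - 1)).mul_left (f (k - 1) / ρ)).congr (fun n => (hterm n).symm)
  have hsum2 : Summable (fun n : ℕ => c k ((n + 1) - 1) * f ((n + 1) - 1)) := by
    simpa using hμsum
  have htsum1 : (∑' n : ℕ, (1 / ((n : ℝ) + 1)) * c (n + 1) (k - 1) * f (k - 1) * p (n + 1))
      = (f (k - 1) / ρ) * β (k - 1) := by
    rw [tsum_congr hterm, tsum_mul_left, hβ]
  have htsum2 : (∑' n : ℕ, c k ((n + 1) - 1) * f ((n + 1) - 1)) = μ k := by
    rw [hμ]; exact tsum_congr (fun n => by simp)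
  -- cast facts
  have hkcast : ((k - 1 : ℕ) : ℝ) = (k : ℝ) - 1 := by
    have : 1 ≤ k := by omega
    push_cast [this]; ring
  have hk1 : (1 : ℝ) ≤ (k : ℝ) - 1 := by
    have : (2 : ℝ) ≤ (k : ℝ) := by exact_mod_cast hk
    linarith
  have hk0 : (k : ℝ) ≠ 0 := by positivity
  have hkm1 : (k : ℝ) - 1 ≠ 0 := by linarith
  have hkp1 : (k : ℝ) + 1 ≠ 0 := by positivity
  refine ⟨hsum1, hsum2, ?_, ?_, htsum2⟩
  · rw [htsum1, htsum2, hp (k + 1) (by omega), hp k (by omega), hp (k - 1) (by omega), hkcast]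
    push_cast
    field_simp
    ring
  · rw [htsum1, hp (k - 1) (by omega), hkcast]
    field_simp
end

section
/- Let C, ρ > 0 and let L ≥ 2 be an integer. Let g : ℕ → ℝ be bounded with ‖g‖_∞ := sup_m |g(m)| < ∞, let W ≥ 1 be an integer, let F : ℕ → [0,∞) be finitely supported with Σ_k k·F_k ≤ ρ, and let f : ℕ → [0,∞) satisfy Σ_k f_k ≤ 1 and Σ_k k·f_k ≤ ρ. Set β := Σ_{k≥1} c(k,W)·f_k and μ := Σ_{k≥0} c(W,k)·f_k, and define A := β·(g(W+1) − g(W)) + ((W−1)/W)·μ·(g(W−1) − g(W)) + (1/W)·Σ_{k≥1} c(W,k−1)·f_{k−1}·(g(k) − g(W)), and B := Σ_{k≥1} c(k,W)·F_k·(g(W+1) − g(W)) + ((W−1)/W)·Σ_{k≥0} c(W,k)·F_k·(g(W−1) − g(W)) + (1/W)·Σ_{k≥0} c(W,k)·F_k·(g(k+1) − g(W)) − (1/L)·c(W,W)·[ ((W+1)/W)·(g(W+1) − g(W)) + ((W−1)/W)·(g(W−1) − g(W)) ]. Then |A − B| ≤ 2·‖g‖_∞·( 4·C·W·Σ_{k≥1}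 k·|F_k − f_k| + C·W·|F_0 − f_0| + 4·C·W²/L ). -/
private lemma abs_tsum_le_aux {h b : ℕ → ℝ} (hle : ∀ k, |h k| ≤ b k) (hb : Summable b) :
    |∑' k, h k| ≤ ∑' k, b k := by
  have hh : Summable fun k => |h k| :=
    Summable.of_nonneg_of_le (fun k => abs_nonneg _) hle hb
  calc |∑' k, h k| ≤ ∑' k, |h k| := by
        simpa [Real.norm_eq_abs] using
          norm_tsum_le_tsum_norm (f := h) (by simpa [Real.norm_eq_abs] using hh)
    _ ≤ ∑' k, b k := Summable.tsum_le_tsum hle hh hb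


private lemma final_comb {D1 D2 D3 cWW G1 G2 br Wr Lr C Gn d0 S : ℝ}
    (hW1 : 1 ≤ Wr) (hL0 : 0 < Lr) (hGn0 : 0 ≤ Gn) (hC : 0 ≤ C)
    (hcWW0 : 0 ≤ cWW) (hcWW : cWW ≤ 2 * C * Wr ^ 2)
    (hS0 : 0 ≤ S) (hd0 : 0 ≤ d0)
    (hA : |D1| ≤ C * (1 + Wr) * S) (hB : |D2| ≤ C * Wr * (d0 + 2 * S))
    (hD3 : |D3| ≤ (C * Wr * (d0 + 2 * S)) * (2 * Gn))
    (hG1 : |G1| ≤ 2 * Gn) (hG2 : |G2| ≤ 2 * Gn) (hbr : |br| ≤ 4 * Gn) :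
    |D1 * G1 + (Wr - 1) / Wr * (D2 * G2) + 1 / Wr * D3 + 1 / Lr * cWW * br|
      ≤ 2 * Gn * (4 * C * Wr * S + C * Wr * d0 + 4 * C * Wr ^ 2 / Lr) := by
  have hW0 : (0:ℝ) < Wr := lt_of_lt_of_le one_pos hW1
  have hc2 : (0:ℝ) ≤ (Wr - 1) / Wr := div_nonneg (by linarith) hW0.le
  have hM : (0:ℝ) ≤ C * Wr * (d0 + 2 * S) :=
    mul_nonneg (mul_nonneg hC hW0.le) (by linarith)
  have hA0 : (0:ℝ) ≤ C * (1 + Wr) * S :=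
    mul_nonneg (mul_nonneg hC (by linarith)) hS0
  have t1 : |D1 * G1| ≤ (C * (1 + Wr) * S) * (2 * Gn) := by
    rw [abs_mul]; exact mul_le_mul hA hG1 (abs_nonneg _) hA0
  have t2 : |(Wr - 1) / Wr * (D2 * G2)|
      ≤ (Wr - 1) / Wr * ((C * Wr * (d0 + 2 * S)) * (2 * Gn)) := by
    rw [abs_mul, abs_of_nonneg hc2, abs_mul]
    exact mul_le_mul_of_nonneg_left
      (mul_le_mul hB hG2 (abs_nonneg _) hM) hc2
  have t3 : |1 / Wr * D3| ≤ 1 / Wr * ((C * Wr * (d0 + 2 * S)) * (2 * Gn)) := by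
    rw [abs_mul, abs_of_nonneg (by positivity : (0:ℝ) ≤ 1 / Wr)]
    exact mul_le_mul_of_nonneg_left hD3 (by positivity)
  have t4 : |1 / Lr * cWW * br| ≤ 1 / Lr * (2 * C * Wr ^ 2) * (4 * Gn) := by
    rw [abs_mul, abs_mul, abs_of_nonneg (by positivity : (0:ℝ) ≤ 1 / Lr),
      abs_of_nonneg hcWW0]
    have h1 : 1 / Lr * cWW ≤ 1 / Lr * (2 * C * Wr ^ 2) :=
      mul_le_mul_of_nonneg_left hcWW (by positivity)
    exact mul_le_mul h1 hbr (abs_nonneg _)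
      (mul_nonneg (by positivity)
        (mul_nonneg (mul_nonneg (by norm_num) hC) (sq_nonneg Wr)))
  have hsplit : |D1 * G1 + (Wr - 1) / Wr * (D2 * G2) + 1 / Wr * D3 + 1 / Lr * cWW * br|
      ≤ |D1 * G1| + |(Wr - 1) / Wr * (D2 * G2)| + |1 / Wr * D3| + |1 / Lr * cWW * br| := by
    calc _ ≤ |D1 * G1 + (Wr - 1) / Wr * (D2 * G2) + 1 / Wr * D3| + |1 / Lr * cWW * br| :=
          abs_add_le _ _
      _ ≤ _ := by linarith [abs_add_three (D1 * G1) ((Wr - 1) / Wr * (D2 * G2)) (1 / Wr * D3)]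
  have h23 : (Wr - 1) / Wr * ((C * Wr * (d0 + 2 * S)) * (2 * Gn))
      + 1 / Wr * ((C * Wr * (d0 + 2 * S)) * (2 * Gn))
      = (C * Wr * (d0 + 2 * S)) * (2 * Gn) := by
    field_simp
    ring
  have h1q : (C * (1 + Wr) * S) * (2 * Gn) ≤ 2 * Gn * (2 * C * Wr * S) := by
    nlinarith [mul_nonneg (mul_nonneg (mul_nonneg hGn0 hC) hS0) (sub_nonneg.2 hW1)]
  have h4q : 1 / Lr * (2 * C * Wr ^ 2) * (4 * Gn) = 2 * Gn * (4 * C * Wr ^ 2 / Lr) := by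
    field_simp
  have hfin : 2 * Gn * (2 * C * Wr * S) + (C * Wr * (d0 + 2 * S)) * (2 * Gn)
      + 2 * Gn * (4 * C * Wr ^ 2 / Lr)
      = 2 * Gn * (4 * C * Wr * S + C * Wr * d0 + 4 * C * Wr ^ 2 / Lr) := by ring
  linarith

/-- Deterministic comparison bound between the limiting tagged-site
generator `A = 𝓛̂ g(W)` (with mean-field profile `f`) and the rescaled
finite-`L` tagged-site generator `B = ((L−1)/L)·𝓛̂^L g(W)` (with empirical
measure `F`), for a bounded test function `g`. -/
theorem stmt_15 (C ρ : ℝ) (hC : 0 < C) (hρ : 0 < ρ)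
    (c : ℕ → ℕ → ℝ)
    (hc_nonneg : ∀ k l, 0 ≤ c k l)
    (hc_zero : ∀ l, c 0 l = 0)
    (hc_sub : ∀ k l, c k l ≤ C * k * (1 + l))
    (L : ℕ) (hL : 2 ≤ L)
    (g : ℕ → ℝ) (Gn : ℝ) (hg : ∀ m, |g m| ≤ Gn)
    (W : ℕ) (hW : 1 ≤ W)
    (F : ℕ → ℝ) (hF : ∀ k, 0 ≤ F k) (hFfin : (Function.support F).Finite)
    (hFρ : (∑' k : ℕ, (k : ℝ) * F k) ≤ ρ)
    (f : ℕ → ℝ) (hf : ∀ k, 0 ≤ f k)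
    (hfs : Summable f) (hfks : Summable (fun k : ℕ => (k : ℝ) * f k))
    (hf1 : (∑' k : ℕ, f k) ≤ 1) (hfρ : (∑' k : ℕ, (k : ℝ) * f k) ≤ ρ) :
    |((∑' k : ℕ, c (k + 1) W * f (k + 1)) * (g (W + 1) - g W)
        + (((W : ℝ) - 1) / (W : ℝ)) * (∑' k : ℕ, c W k * f k) * (g (W - 1) - g W)
        + (1 / (W : ℝ)) * ∑' k : ℕ, c W k * f k * (g (k + 1) - g W))
      - ((∑' k : ℕ, c (k + 1) W * F (k + 1) * (g (W + 1) - g W))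
        + (((W : ℝ) - 1) / (W : ℝ)) * (∑' k : ℕ, c W k * F k) * (g (W - 1) - g W)
        + (1 / (W : ℝ)) * (∑' k : ℕ, c W k * F k * (g (k + 1) - g W))
        - (1 / (L : ℝ)) * c W W *
            ((((W : ℝ) + 1) / (W : ℝ)) * (g (W + 1) - g W)
              + (((W : ℝ) - 1) / (W : ℝ)) * (g (W - 1) - g W)))|
    ≤ 2 * Gn *
        (4 * C * W * (∑' k : ℕ, (k : ℝ) * |F k - f k|)
          + C * W * |F 0 - f 0|
          + 4 * C * (W : ℝ) ^ 2 / L) := by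
  -- basic positivity facts
  have hW1 : (1:ℝ) ≤ (W:ℝ) := by exact_mod_cast hW
  have hW0 : (0:ℝ) < (W:ℝ) := lt_of_lt_of_le one_pos hW1
  have hL0 : (0:ℝ) < (L:ℝ) := by exact_mod_cast (by omega : 0 < L)
  have hGn0 : 0 ≤ Gn := (abs_nonneg _).trans (hg 0)
  have hgd : ∀ a b : ℕ, |g a - g b| ≤ 2 * Gn := by
    intro a b
    have h1 := abs_le.1 (hg a); have h2 := abs_le.1 (hg b)
    rw [abs_sub_le_iff]; constructor <;> linarith [h1.1, h1.2, h2.1, h2.2]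
  set S := ∑' k : ℕ, (k : ℝ) * |F k - f k| with hSdef
  have hS0 : 0 ≤ S := tsum_nonneg fun k => mul_nonneg (Nat.cast_nonneg k) (abs_nonneg _)
  -- summability: F side via finite support
  have hFsupp : ∀ (h : ℕ → ℝ), (∀ k, F k = 0 → h k = 0) → Summable h := by
    intro h hh
    apply summable_of_finite_support
    refine hFfin.subset fun k hk => ?_
    simp only [Function.mem_support] at hk ⊢
    exact fun h0 => hk (hh k h0)
  have hFsum : Summable F := hFsupp F fun k hk => hk
  have hFksum : Summable (fun k : ℕ => (k:ℝ) * F k) := hFsupp _ fun k hk => by simp [hk]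
  have SF1 : Summable (fun k : ℕ => c (k+1) W * F (k+1)) := by
    apply summable_of_finite_support
    have hsub : Function.support (fun k : ℕ => c (k+1) W * F (k+1))
        ⊆ (fun k : ℕ => k + 1) ⁻¹' Function.support F := by
      intro k hk
      simp only [Function.mem_support, Set.mem_preimage, Function.mem_support] at hk ⊢
      exact fun h0 => hk (by simp [h0])
    exact (Set.Finite.preimage (fun a _ b _ hab => by simpa using hab) hFfin).subset hsub
  have SF2 : Summable (fun k : ℕ => c W k * F k) := hFsupp _ fun k hk => by simp [hk]
  have SF3 : Summable (fun k : ℕ => c W k * F k * (g (k+1) - g W)) :=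
    hFsupp _ fun k hk => by simp [hk]
  -- summability: f side
  have hfks1 : Summable (fun k : ℕ => ((k:ℝ) + 1) * f (k+1)) := by
    have h := (summable_nat_add_iff 1).2 hfks
    exact h.congr fun k => by push_cast; ring
  have Sf1 : Summable (fun k : ℕ => c (k+1) W * f (k+1)) := by
    refine Summable.of_nonneg_of_le (fun k => mul_nonneg (hc_nonneg _ _) (hf _))
      (fun k => ?_) (hfks1.mul_left (C * (1 + (W:ℝ))))
    have h1 : c (k+1) W ≤ C * (1 + (W:ℝ)) * ((k:ℝ) + 1) := by
      have h := hc_sub (k+1) W; push_cast at h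
      exact h.trans (le_of_eq (by ring))
    calc c (k+1) W * f (k+1) ≤ (C * (1 + (W:ℝ)) * ((k:ℝ)+1)) * f (k+1) :=
          mul_le_mul_of_nonneg_right h1 (hf _)
      _ = C * (1 + (W:ℝ)) * (((k:ℝ)+1) * f (k+1)) := by ring
  have Sf2 : Summable (fun k : ℕ => c W k * f k) := by
    refine Summable.of_nonneg_of_le (fun k => mul_nonneg (hc_nonneg _ _) (hf _))
      (fun k => ?_) ((hfs.mul_left (C * (W:ℝ))).add (hfks.mul_left (C * (W:ℝ))))
    have h1 : c W k ≤ C * (W:ℝ) * (1 + (k:ℝ)) := by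
      have h := hc_sub W k; push_cast at h; exact h
    calc c W k * f k ≤ (C * (W:ℝ) * (1 + (k:ℝ))) * f k :=
          mul_le_mul_of_nonneg_right h1 (hf _)
      _ = C * (W:ℝ) * f k + C * (W:ℝ) * ((k:ℝ) * f k) := by ring
  have Sf3 : Summable (fun k : ℕ => c W k * f k * (g (k+1) - g W)) := by
    apply Summable.of_norm
    refine Summable.of_nonneg_of_le (fun k => norm_nonneg _) (fun k => ?_)
      (Sf2.mul_right (2 * Gn))
    rw [Real.norm_eq_abs, abs_mul, abs_of_nonneg (mul_nonneg (hc_nonneg _ _) (hf _))]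
    exact mul_le_mul_of_nonneg_left (hgd _ _) (mul_nonneg (hc_nonneg _ _) (hf _))
  -- summability: difference side
  have habs_le : ∀ k, |F k - f k| ≤ F k + f k := fun k => by
    rw [abs_sub_le_iff]; constructor <;> linarith [hF k, hf k]
  have habsd : Summable (fun k : ℕ => |F k - f k|) :=
    Summable.of_nonneg_of_le (fun k => abs_nonneg _) habs_le (hFsum.add hfs)
  have hkabs : Summable (fun k : ℕ => (k:ℝ) * |F k - f k|) := by
    refine Summable.of_nonneg_of_le
      (fun k => mul_nonneg (Nat.cast_nonneg k) (abs_nonneg _)) (fun k => ?_)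
      (hFksum.add hfks)
    calc (k:ℝ) * |F k - f k| ≤ (k:ℝ) * (F k + f k) :=
          mul_le_mul_of_nonneg_left (habs_le k) (Nat.cast_nonneg k)
      _ = (k:ℝ) * F k + (k:ℝ) * f k := by ring
  have hkabs1 : Summable (fun k : ℕ => ((k:ℝ)+1) * |F (k+1) - f (k+1)|) := by
    have h := (summable_nat_add_iff 1).2 hkabs
    exact h.congr fun k => by push_cast; ring
  have h1kabs : Summable (fun k : ℕ => (1 + (k:ℝ)) * |F k - f k|) :=
    (habsd.add hkabs).congr fun k => by ring
  have hcWd : Summable (fun k : ℕ => c W k * |F k - f k|) := by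
    refine Summable.of_nonneg_of_le (fun k => mul_nonneg (hc_nonneg _ _) (abs_nonneg _))
      (fun k => ?_) (h1kabs.mul_left (C * (W:ℝ)))
    have h1 : c W k ≤ C * (W:ℝ) * (1 + (k:ℝ)) := by
      have h := hc_sub W k; push_cast at h; exact h
    calc c W k * |F k - f k| ≤ (C * (W:ℝ) * (1 + (k:ℝ))) * |F k - f k| :=
          mul_le_mul_of_nonneg_right h1 (abs_nonneg _)
      _ = C * (W:ℝ) * ((1 + (k:ℝ)) * |F k - f k|) := by ring
  -- the shift identity
  have hshift : (∑' k : ℕ, ((k:ℝ)+1) * |F (k+1) - f (k+1)|) = S := by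
    have h := Function.Injective.tsum_eq (g := fun k : ℕ => k + 1)
      (f := fun j : ℕ => (j:ℝ) * |F j - f j|)
      (fun a b hab => by simpa using hab) ?_
    · rw [hSdef, ← h]
      exact tsum_congr fun k => by push_cast; ring
    · intro x hx
      simp only [Function.mem_support] at hx
      rcases Nat.eq_zero_or_pos x with h0 | h0
      · subst h0; simp at hx
      · exact ⟨x - 1, by show x - 1 + 1 = x; omega⟩
  -- bound for ∑ c W k |F k - f k|
  have hite : Summable (fun k : ℕ => if k = 0 then C * (W:ℝ) * |F 0 - f 0| else 0) := by
    apply summable_of_finite_support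
    refine (Set.finite_singleton (0:ℕ)).subset fun x hx => ?_
    simp only [Function.mem_support, Set.mem_singleton_iff] at hx ⊢
    by_contra h; exact hx (by simp [h])
  have hb0 : Summable (fun k : ℕ =>
      (if k = 0 then C * (W:ℝ) * |F 0 - f 0| else 0)
        + C * (W:ℝ) * (2 * ((k:ℝ) * |F k - f k|))) :=
    hite.add ((hkabs.mul_left 2).mul_left (C * (W:ℝ)))
  have hpt : ∀ k : ℕ, c W k * |F k - f k| ≤
      (if k = 0 then C * (W:ℝ) * |F 0 - f 0| else 0)
        + C * (W:ℝ) * (2 * ((k:ℝ) * |F k - f k|)) := by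
    intro k
    match k with
    | 0 =>
      have h1 : c W 0 ≤ C * (W:ℝ) := by
        have h := hc_sub W 0; push_cast at h; linarith
      have h2 := mul_le_mul_of_nonneg_right h1 (abs_nonneg (F 0 - f 0))
      simpa using h2
    | (n+1) =>
      have hcc : c W (n+1) ≤ C * (W:ℝ) * (2 * ((n:ℝ)+1)) := by
        have h := hc_sub W (n+1); push_cast at h
        nlinarith [mul_nonneg hC.le (Nat.cast_nonneg W : (0:ℝ) ≤ (W:ℝ)),
          (Nat.cast_nonneg n : (0:ℝ) ≤ (n:ℝ))]
      have h2 := mul_le_mul_of_nonneg_right hcc (abs_nonneg (F (n+1) - f (n+1)))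
      simp only [if_neg (Nat.succ_ne_zero n)]
      push_cast
      push_cast at h2
      linarith [h2]
  have hB' : (∑' k : ℕ, c W k * |F k - f k|) ≤ C * (W:ℝ) * (|F 0 - f 0| + 2 * S) := by
    calc (∑' k : ℕ, c W k * |F k - f k|)
        ≤ ∑' k : ℕ, ((if k = 0 then C * (W:ℝ) * |F 0 - f 0| else 0)
            + C * (W:ℝ) * (2 * ((k:ℝ) * |F k - f k|))) :=
          Summable.tsum_le_tsum hpt hcWd hb0
      _ = C * (W:ℝ) * |F 0 - f 0| + C * (W:ℝ) * (2 * S) := by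
          rw [Summable.tsum_add hite ((hkabs.mul_left 2).mul_left (C * (W:ℝ))),
            tsum_ite_eq, tsum_mul_left, tsum_mul_left, hSdef]
      _ = C * (W:ℝ) * (|F 0 - f 0| + 2 * S) := by ring
  -- bounds on the three difference tsums
  have hA : |∑' k : ℕ, (c (k+1) W * f (k+1) - c (k+1) W * F (k+1))|
      ≤ C * (1 + (W:ℝ)) * S := by
    have hle : ∀ k : ℕ, |c (k+1) W * f (k+1) - c (k+1) W * F (k+1)|
        ≤ C * (1 + (W:ℝ)) * (((k:ℝ)+1) * |F (k+1) - f (k+1)|) := by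
      intro k
      rw [← mul_sub, abs_mul, abs_of_nonneg (hc_nonneg _ _), abs_sub_comm]
      have h1 : c (k+1) W ≤ C * (1 + (W:ℝ)) * ((k:ℝ) + 1) := by
        have h := hc_sub (k+1) W; push_cast at h
        exact h.trans (le_of_eq (by ring))
      calc c (k+1) W * |F (k+1) - f (k+1)|
          ≤ (C * (1 + (W:ℝ)) * ((k:ℝ)+1)) * |F (k+1) - f (k+1)| :=
            mul_le_mul_of_nonneg_right h1 (abs_nonneg _)
        _ = C * (1 + (W:ℝ)) * (((k:ℝ)+1) * |F (k+1) - f (k+1)|) := by ring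
    calc |∑' k : ℕ, (c (k+1) W * f (k+1) - c (k+1) W * F (k+1))|
        ≤ ∑' k : ℕ, C * (1 + (W:ℝ)) * (((k:ℝ)+1) * |F (k+1) - f (k+1)|) :=
          abs_tsum_le_aux hle (hkabs1.mul_left _)
      _ = C * (1 + (W:ℝ)) * ∑' k : ℕ, ((k:ℝ)+1) * |F (k+1) - f (k+1)| := tsum_mul_left
      _ = C * (1 + (W:ℝ)) * S := by rw [hshift]
  have hB : |∑' k : ℕ, (c W k * f k - c W k * F k)|
      ≤ C * (W:ℝ) * (|F 0 - f 0| + 2 * S) := by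
    have hle : ∀ k : ℕ, |c W k * f k - c W k * F k| ≤ c W k * |F k - f k| := by
      intro k
      rw [← mul_sub, abs_mul, abs_of_nonneg (hc_nonneg _ _), abs_sub_comm]
    exact (abs_tsum_le_aux hle hcWd).trans hB'
  have hD3b : |∑' k : ℕ, (c W k * f k * (g (k+1) - g W) - c W k * F k * (g (k+1) - g W))|
      ≤ (C * (W:ℝ) * (|F 0 - f 0| + 2 * S)) * (2 * Gn) := by
    have hle : ∀ k : ℕ, |c W k * f k * (g (k+1) - g W) - c W k * F k * (g (k+1) - g W)|
        ≤ (c W k * |F k - f k|) * (2 * Gn) := by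
      intro k
      have e : c W k * f k * (g (k+1) - g W) - c W k * F k * (g (k+1) - g W)
          = (c W k * (f k - F k)) * (g (k+1) - g W) := by ring
      rw [e, abs_mul, abs_mul, abs_of_nonneg (hc_nonneg _ _), abs_sub_comm]
      exact mul_le_mul_of_nonneg_left (hgd _ _)
        (mul_nonneg (hc_nonneg _ _) (abs_nonneg _))
    calc |∑' k : ℕ, (c W k * f k * (g (k+1) - g W) - c W k * F k * (g (k+1) - g W))|
        ≤ ∑' k : ℕ, (c W k * |F k - f k|) * (2 * Gn) :=
          abs_tsum_le_aux hle (hcWd.mul_right _)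
      _ = (∑' k : ℕ, c W k * |F k - f k|) * (2 * Gn) := tsum_mul_right
      _ ≤ (C * (W:ℝ) * (|F 0 - f 0| + 2 * S)) * (2 * Gn) :=
          mul_le_mul_of_nonneg_right hB' (by linarith)
  -- the exact decomposition
  have hD1 : (∑' k : ℕ, (c (k+1) W * f (k+1) - c (k+1) W * F (k+1)))
      = (∑' k : ℕ, c (k+1) W * f (k+1)) - (∑' k : ℕ, c (k+1) W * F (k+1)) :=
    Summable.tsum_sub Sf1 SF1
  have hD2 : (∑' k : ℕ, (c W k * f k - c W k * F k))
      = (∑' k : ℕ, c W k * f k) - (∑' k : ℕ, c W k * F k) := Summable.tsum_sub Sf2 SF2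
  have hD3 : (∑' k : ℕ, (c W k * f k * (g (k+1) - g W) - c W k * F k * (g (k+1) - g W)))
      = (∑' k : ℕ, c W k * f k * (g (k+1) - g W))
        - (∑' k : ℕ, c W k * F k * (g (k+1) - g W)) := Summable.tsum_sub Sf3 SF3
  have e1 : (∑' k : ℕ, c (k + 1) W * F (k + 1) * (g (W + 1) - g W))
      = (∑' k : ℕ, c (k + 1) W * F (k + 1)) * (g (W + 1) - g W) := tsum_mul_right
  have key : ((∑' k : ℕ, c (k + 1) W * f (k + 1)) * (g (W + 1) - g W)
        + (((W : ℝ) - 1) / (W : ℝ)) * (∑' k : ℕ, c W k * f k) * (g (W - 1) - g W)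
        + (1 / (W : ℝ)) * ∑' k : ℕ, c W k * f k * (g (k + 1) - g W))
      - ((∑' k : ℕ, c (k + 1) W * F (k + 1) * (g (W + 1) - g W))
        + (((W : ℝ) - 1) / (W : ℝ)) * (∑' k : ℕ, c W k * F k) * (g (W - 1) - g W)
        + (1 / (W : ℝ)) * (∑' k : ℕ, c W k * F k * (g (k + 1) - g W))
        - (1 / (L : ℝ)) * c W W *
            ((((W : ℝ) + 1) / (W : ℝ)) * (g (W + 1) - g W)
              + (((W : ℝ) - 1) / (W : ℝ)) * (g (W - 1) - g W)))
      = (∑' k : ℕ, (c (k+1) W * f (k+1) - c (k+1) W * F (k+1))) * (g (W + 1) - g W)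
        + (((W : ℝ) - 1) / (W : ℝ)) * ((∑' k : ℕ, (c W k * f k - c W k * F k))
            * (g (W - 1) - g W))
        + (1 / (W : ℝ)) * (∑' k : ℕ, (c W k * f k * (g (k + 1) - g W)
            - c W k * F k * (g (k + 1) - g W)))
        + (1 / (L : ℝ)) * c W W *
            ((((W : ℝ) + 1) / (W : ℝ)) * (g (W + 1) - g W)
              + (((W : ℝ) - 1) / (W : ℝ)) * (g (W - 1) - g W)) := by
    rw [e1, hD1, hD2, hD3]; ring
  rw [key]
  have hbr : |(((W : ℝ) + 1) / (W : ℝ)) * (g (W + 1) - g W)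
      + (((W : ℝ) - 1) / (W : ℝ)) * (g (W - 1) - g W)| ≤ 4 * Gn := by
    have hc1 : (0:ℝ) ≤ ((W:ℝ) + 1) / (W:ℝ) := by positivity
    have hc2 : (0:ℝ) ≤ ((W:ℝ) - 1) / (W:ℝ) := div_nonneg (by linarith) hW0.le
    have h1 : |(((W : ℝ) + 1) / (W : ℝ)) * (g (W + 1) - g W)|
        ≤ (((W:ℝ) + 1) / (W:ℝ)) * (2 * Gn) := by
      rw [abs_mul, abs_of_nonneg hc1]
      exact mul_le_mul_of_nonneg_left (hgd _ _) hc1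
    have h2 : |(((W : ℝ) - 1) / (W : ℝ)) * (g (W - 1) - g W)|
        ≤ (((W:ℝ) - 1) / (W:ℝ)) * (2 * Gn) := by
      rw [abs_mul, abs_of_nonneg hc2]
      exact mul_le_mul_of_nonneg_left (hgd _ _) hc2
    have heq : (((W:ℝ) + 1) / (W:ℝ)) * (2 * Gn) + (((W:ℝ) - 1) / (W:ℝ)) * (2 * Gn)
        = 4 * Gn := by
      field_simp
      ring
    calc |(((W : ℝ) + 1) / (W : ℝ)) * (g (W + 1) - g W)
        + (((W : ℝ) - 1) / (W : ℝ)) * (g (W - 1) - g W)|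
        ≤ |(((W : ℝ) + 1) / (W : ℝ)) * (g (W + 1) - g W)|
          + |(((W : ℝ) - 1) / (W : ℝ)) * (g (W - 1) - g W)| := abs_add_le _ _
      _ ≤ 4 * Gn := by linarith
  have hcWW : c W W ≤ 2 * C * (W:ℝ) ^ 2 := by
    have h := hc_sub W W
    nlinarith [h, mul_nonneg (mul_nonneg hC.le hW0.le) (sub_nonneg.2 hW1)]
  exact final_comb hW1 hL0 hGn0 hC.le (hc_nonneg W W) hcWW hS0 (abs_nonneg _)
    hA hB hD3b (hgd _ _) (hgd _ _) hbr
end
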